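/- arXiv:1301.0292 — 2 statements merged into one kernel-verified Lean document; each statement's English description precedes it below -/
import Mathlib

section
/- Let G = Q:L be a biextraspecial group. Then Z(G) = 1, L is self-normalizing in G, and Out(G) ≅ C_{Aut(G)}(L), the group of automorphisms of G that centralize L. -/
set_option maxRecDepth 100000


/-- The centre of the subgroup `Q`, viewed as a subgroup of the ambient group `G`. -/
def centerOf (G : Type*) [Group G] (Q : Subgroup G) : Subgroup G :=
  Subgroup.centralizer (Q : Set G) ⊓ Q

open scoped commutatorElement

/-- A biextraspecial group of rank `m`: `G` is an extension of a special 2-group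
`Q` of order `2^(2+2m)` by `L₂(2) ≅ S₃`, the centre `Z = Z(Q) ≅ 2²` is the natural
module (elementary abelian of order 4 with faithful induced `G/Q`-action), `Q/Z` is
elementary abelian, and every element of order 3 acts fixed-point-freely on `Q`
(equivalently, `Q/Z` has only natural composition factors). -/
structure IsBiextraspecial (G : Type*) [Group G] (Q : Subgroup G) (m : ℕ) : Prop where
  normal : Q.Normal
  card_Q : Nat.card Q = 2 ^ (2 + 2 * m)
  quot_iso : Nonempty ((G ⧸ Q) ≃* Equiv.Perm (Fin 3))
  card_center : Nat.card (centerOf G Q) = 4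
  center_exponent : ∀ z ∈ centerOf G Q, z * z = 1
  center_faithful : ∀ g : G, (∀ z ∈ centerOf G Q, g * z * g⁻¹ = z) → g ∈ Q
  sq_mem_center : ∀ q ∈ Q, q * q ∈ centerOf G Q
  comm_mem_center : ∀ q ∈ Q, ∀ r ∈ Q, ⁅q, r⁆ ∈ centerOf G Q
  order_three_fpf : ∀ g : G, orderOf g = 3 → ∀ q ∈ Q, g * q * g⁻¹ = q → q = 1

/-- A dent: a normal subgroup `D` of `G` with `Z(Q) < D < Q` such that `D/Z` is an
irreducible `L`-submodule of `Q/Z` (i.e. `D` is minimal among normal subgroups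
strictly containing `Z(Q)`). -/
structure IsDent (G : Type*) [Group G] (Q D : Subgroup G) : Prop where
  normal : D.Normal
  center_lt : centerOf G Q < D
  lt_Q : D < Q
  minimal : ∀ E : Subgroup G, E.Normal → centerOf G Q < E → E ≤ D → E = D

/-- `D₃` is the diagonal dent of the distinct dents `D₁` and `D₂`: the unique third
dent contained in `D₁D₂`. -/
def IsDiagonal (G : Type*) [Group G] (Q D₁ D₂ D₃ : Subgroup G) : Prop :=
  IsDent G Q D₁ ∧ IsDent G Q D₂ ∧ IsDent G Q D₃ ∧
    D₁ ≠ D₂ ∧ D₃ ≠ D₁ ∧ D₃ ≠ D₂ ∧ D₃ ≤ D₁ ⊔ D₂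

/-- Two subgroups commute elementwise, i.e. `[D₁, D₂] = 1`. -/
def DentsCommute (G : Type*) [Group G] (D₁ D₂ : Subgroup G) : Prop :=
  ∀ d₁ ∈ D₁, ∀ d₂ ∈ D₂, d₁ * d₂ = d₂ * d₁

/-- A dent is singular when it is elementary abelian (of type `2⁴`). -/
def IsSingularDent (G : Type*) [Group G] (D : Subgroup G) : Prop :=
  ∀ d ∈ D, d * d = 1

/-- A standard basis `x, y` of a dent `D` with respect to `L = ⟨s, t⟩`:
`D = ⟨x, y, Z⟩` with `xᵗ = x`, `xˢ = y` and `yˢ = xy` (singular case) or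
`yˢ = x⁻¹y⁻¹` (non-singular case). -/
structure StdBasis (G : Type*) [Group G] (Q : Subgroup G) (s t : G)
    (D : Subgroup G) (x y : G) : Prop where
  x_mem : x ∈ D
  x_notin : x ∉ centerOf G Q
  gen : D = centerOf G Q ⊔ Subgroup.closure {x, y}
  t_fix : t * x * t⁻¹ = x
  s_x : s * x * s⁻¹ = y
  s_y : s * y * s⁻¹ = x * y ∨ s * y * s⁻¹ = x⁻¹ * y⁻¹

/-- The subgroup of inner automorphisms is normal in `Aut G`. -/
instance innNormal (G : Type*) [Group G] : (MulAut.conj (G := G)).range.Normal := by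
  constructor
  rintro n ⟨g, rfl⟩ α
  refine ⟨α g, ?_⟩
  ext x
  simp [MulAut.conj_apply, MulAut.mul_apply, MulAut.inv_def, map_mul, map_inv]

/-- The centraliser `C_{Aut(G)}(L)` of a subgroup `L` in the automorphism group of
`G`: all automorphisms fixing `L` elementwise. -/
def autCentralizer (G : Type*) [Group G] (L : Subgroup G) : Subgroup (MulAut G) where
  carrier := {α : MulAut G | ∀ l ∈ L, α l = l}
  one_mem' := fun l _ => rfl
  mul_mem' := by
    intro α β hα hβ l hl
    have : (α * β) l = α (β l) := rfl
    rw [this, hβ l hl, hα l hl]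
  inv_mem' := by
    intro α hα l hl
    have h1 : α⁻¹ (α l) = l := α.symm_apply_apply l
    rw [hα l hl] at h1
    exact h1

namespace Stmt17Aux
open Pointwise

abbrev P3 := Equiv.Perm (Fin 3)

lemma P3_card : Nat.card P3 = 6 := by rw [Nat.card_eq_fintype_card]; decide

lemma P3_center : ∀ x : P3, (∀ y, x * y = y * x) → x = 1 := by decide

lemma P3_invol : ∀ x : P3, x * x = 1 → x ≠ 1 →
    ∃ τ : P3, (τ*x*τ⁻¹*x)*(τ*x*τ⁻¹*x)*(τ*x*τ⁻¹*x) = 1 ∧ τ*x*τ⁻¹*x ≠ 1 := by decide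

lemma P3_cycle_conj : ∀ c x : P3, c * c * c = 1 → x*c*x⁻¹ = c ∨ x*c*x⁻¹ = c*c := by decide

lemma P3_pair : ∀ u v : P3, (u*u = 1 ∧ v*v = 1 ∧ u ≠ 1 ∧ v ≠ 1 ∧ u ≠ v) →
    ∃ σ : P3, σ * (Equiv.swap 0 1) * σ⁻¹ = u ∧ σ * (Equiv.swap 0 2) * σ⁻¹ = v := by decide

lemma P3_enum : ∀ x : P3, x = 1 ∨ x = Equiv.swap 0 1 ∨ x = Equiv.swap 0 2 ∨
    x = Equiv.swap 0 1 * Equiv.swap 0 2 ∨ x = Equiv.swap 0 2 * Equiv.swap 0 1 ∨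
    x = Equiv.swap 0 1 * Equiv.swap 0 2 * Equiv.swap 0 1 := by decide

lemma P3_three : ∃ c : P3, orderOf c = 3 := by
  refine ⟨finRotate 3, orderOf_eq_prime ?_ ?_⟩ <;> decide

/-- every automorphism of `S₃` is inner -/
lemma autP (φ : MulAut P3) : ∃ σ : P3, ∀ x, φ x = σ * x * σ⁻¹ := by
  set a : P3 := Equiv.swap 0 1 with ha
  set b : P3 := Equiv.swap 0 2 with hb
  have haa : a * a = 1 := by decide
  have hbb : b * b = 1 := by decide
  have hu : φ a * φ a = 1 := by rw [← map_mul, haa, map_one]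
  have hv : φ b * φ b = 1 := by rw [← map_mul, hbb, map_one]
  have hu1 : φ a ≠ 1 := by
    intro h
    have := φ.injective (h.trans (map_one φ).symm)
    revert this; decide
  have hv1 : φ b ≠ 1 := by
    intro h
    have := φ.injective (h.trans (map_one φ).symm)
    revert this; decide
  have huv : φ a ≠ φ b := by
    intro h
    have := φ.injective h
    revert this; decide
  obtain ⟨σ, hσa, hσb⟩ := P3_pair (φ a) (φ b) ⟨hu, hv, hu1, hv1, huv⟩
  refine ⟨σ, fun x => ?_⟩
  rcases P3_enum x with h|h|h|h|h|h <;> rw [h] <;>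
    simp only [← ha, ← hb, map_mul, map_one, ← hσa, ← hσb] <;> group

variable {G : Type*} [Group G]

/-- a complement of a normal subgroup is isomorphic to the quotient -/
lemma compl_quot_equiv {Q M : Subgroup G} [Q.Normal] (hM : Q.IsComplement' M) :
    ∃ e : M ≃* G ⧸ Q, ∀ x : M, e x = QuotientGroup.mk (x : G) := by
  set f : M →* G ⧸ Q := (QuotientGroup.mk' Q).comp M.subtype with hf
  have hinj : Function.Injective f := by
    rw [injective_iff_map_eq_one]
    intro x hx
    have hxQ : (x : G) ∈ Q := (QuotientGroup.eq_one_iff _).mp hx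
    exact Subtype.ext (Subgroup.disjoint_def.mp hM.disjoint hxQ x.2)
  have hsurj : Function.Surjective f := by
    intro y
    obtain ⟨g, rfl⟩ := QuotientGroup.mk'_surjective Q y
    obtain ⟨⟨⟨q, hq⟩, ⟨l, hl⟩⟩, hg, -⟩ := hM.existsUnique g
    refine ⟨⟨l, hl⟩, ?_⟩
    have : (QuotientGroup.mk' Q) q = 1 := (QuotientGroup.eq_one_iff _).mpr hq
    calc f ⟨l, hl⟩ = (QuotientGroup.mk' Q) q * (QuotientGroup.mk' Q) l := by
          rw [this, one_mul]; rfl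
    _ = (QuotientGroup.mk' Q) g := by rw [← map_mul, hg]
  exact ⟨MulEquiv.ofBijective f ⟨hinj, hsurj⟩, fun x => rfl⟩

/-- complements are preserved by automorphisms -/
lemma compl_map [Finite G] {Q L : Subgroup G} (hL : Q.IsComplement' L) (α : MulAut G) :
    (Q.map α.toMonoidHom).IsComplement' (L.map α.toMonoidHom) := by
  apply Subgroup.isComplement'_of_card_mul_and_disjoint
  · rw [← Nat.card_congr (Q.equivMapOfInjective α.toMonoidHom α.injective).toEquiv,
      ← Nat.card_congr (L.equivMapOfInjective α.toMonoidHom α.injective).toEquiv]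
    exact hL.card_mul
  · rw [Subgroup.disjoint_def]
    rintro x ⟨q, hq, rfl⟩ hx
    obtain ⟨l, hl, hlx⟩ := hx
    have : l = q := α.injective hlx
    subst this
    rw [Subgroup.disjoint_def.mp hL.disjoint hq hl, map_one]

/-- any complement of `Q` is the normaliser of the cyclic subgroup generated by
any of its order-3 elements -/
lemma compl_norm {Q : Subgroup G} {m : ℕ} (hG : IsBiextraspecial G Q m) [Finite G] [Q.Normal]
    (e0 : (G ⧸ Q) ≃* P3) {M : Subgroup G} (hM : Q.IsComplement' M)
    {t : G} (ht : t ∈ M) (hto : orderOf t = 3) :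
    Subgroup.normalizer (Subgroup.zpowers t : Set G) = M := by
  obtain ⟨e, -⟩ := compl_quot_equiv hM
  set eM : M ≃* P3 := e.trans e0 with heM
  have ht3 : t ^ 3 = 1 := by rw [← hto]; exact pow_orderOf_eq_one t
  have httt : (⟨t, ht⟩ : M) * ⟨t, ht⟩ * ⟨t, ht⟩ = 1 :=
    Subtype.ext (show t * t * t = 1 by
      rw [show t*t*t = t^3 by rw [pow_succ, pow_succ, pow_one], ht3])
  have hc3 : eM ⟨t, ht⟩ * eM ⟨t, ht⟩ * eM ⟨t, ht⟩ = 1 := by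
    rw [← map_mul, ← map_mul, httt, map_one]
  have hconj : ∀ x ∈ M, x * t * x⁻¹ = t ∨ x * t * x⁻¹ = t * t := by
    intro x hx
    have h := P3_cycle_conj (eM ⟨t, ht⟩) (eM ⟨x, hx⟩) hc3
    simp only [← map_inv, ← map_mul] at h
    rcases h with h | h
    · exact Or.inl (congrArg Subtype.val (eM.injective h))
    · exact Or.inr (congrArg Subtype.val (eM.injective h))
  have hconj' : ∀ x ∈ M, x * t * x⁻¹ ∈ Subgroup.zpowers t := by
    intro x hx
    rcases hconj x hx with h | h <;> rw [h]
    · exact Subgroup.mem_zpowers t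
    · exact mul_mem (Subgroup.mem_zpowers t) (Subgroup.mem_zpowers t)
  have hMle : M ≤ Subgroup.normalizer (Subgroup.zpowers t : Set G) := by
    intro x hx
    rw [Subgroup.mem_normalizer_iff]
    intro h
    constructor
    · intro hh
      obtain ⟨k, hk⟩ := Subgroup.mem_zpowers_iff.mp hh
      rw [← hk, ← conj_zpow]
      exact Subgroup.zpow_mem _ (hconj' x hx) k
    · intro hh
      obtain ⟨k, hk⟩ := Subgroup.mem_zpowers_iff.mp hh
      have h3 := hconj' x⁻¹ (inv_mem hx)
      rw [inv_inv] at h3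
      have h2 : h = (x⁻¹ * t * x) ^ k := by
        rw [show (x⁻¹ * t * x) ^ k = x⁻¹ * t ^ k * x by
          rw [show x⁻¹ * t * x = x⁻¹ * t * x⁻¹⁻¹ by rw [inv_inv], conj_zpow, inv_inv],
          hk]
        group
      rw [h2]
      exact Subgroup.zpow_mem _ h3 k
  -- no nontrivial element of Q normalises ⟨t⟩
  have hNQ : ∀ x ∈ Subgroup.normalizer (Subgroup.zpowers t : Set G), x ∈ Q → x = 1 := by
    intro x hxN hxQ
    have h1 : x * t * x⁻¹ ∈ Subgroup.zpowers t :=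
      (Subgroup.mem_normalizer_iff.mp hxN t).mp (Subgroup.mem_zpowers t)
    have huQ : x * t * x⁻¹ * t⁻¹ ∈ Q := by
      have h2 : t * x⁻¹ * t⁻¹ ∈ Q := hG.normal.conj_mem _ (inv_mem hxQ) t
      have h3 := mul_mem hxQ h2
      have h4 : x * (t * x⁻¹ * t⁻¹) = x * t * x⁻¹ * t⁻¹ := by group
      rwa [h4] at h3
    have huz : x * t * x⁻¹ * t⁻¹ ∈ Subgroup.zpowers t :=
      mul_mem h1 (inv_mem (Subgroup.mem_zpowers t))
    have hu3 : (x * t * x⁻¹ * t⁻¹) ^ 3 = 1 := by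
      obtain ⟨k, hk⟩ := Subgroup.mem_zpowers_iff.mp huz
      rw [← hk, ← zpow_natCast, ← zpow_mul, mul_comm, zpow_mul, zpow_natCast, ht3, one_zpow]
    have huord2 : orderOf (x * t * x⁻¹ * t⁻¹) ∣ 2 ^ (2 + 2 * m) := by
      have hd := orderOf_dvd_natCard (⟨_, huQ⟩ : Q)
      rw [hG.card_Q] at hd
      rwa [← orderOf_injective Q.subtype Q.subtype_injective ⟨_, huQ⟩] at hd
    have hord1 : orderOf (x * t * x⁻¹ * t⁻¹) = 1 := by
      have hd3 : orderOf (x * t * x⁻¹ * t⁻¹) ∣ 3 := orderOf_dvd_of_pow_eq_one hu3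
      have hcop : Nat.Coprime 3 (2 ^ (2 + 2 * m)) :=
        Nat.Coprime.pow_right _ (by norm_num)
      have hd := Nat.dvd_gcd hd3 huord2
      rw [Nat.coprime_iff_gcd_eq_one.mp hcop] at hd
      exact Nat.dvd_one.mp hd
    have hu1 : x * t * x⁻¹ = t := mul_inv_eq_one.mp (orderOf_eq_one_iff.mp hord1)
    have h3 : x * t = t * x := by
      have := congrArg (· * x) hu1
      simpa [mul_assoc] using this
    have hcomm : t * x * t⁻¹ = x := by rw [← h3]; group
    exact hG.order_three_fpf t hto x hxQ hcomm
  have hfinQ : Finite (G ⧸ Q) := Quotient.finite _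
  have hcardN : Nat.card (Subgroup.normalizer (Subgroup.zpowers t : Set G)) ≤ 6 := by
    have hinj : Function.Injective
        ((QuotientGroup.mk' Q).comp (Subgroup.normalizer (Subgroup.zpowers t : Set G)).subtype) := by
      rw [injective_iff_map_eq_one]
      intro x hx
      have : (x : G) ∈ Q := (QuotientGroup.eq_one_iff _).mp hx
      exact Subtype.ext (hNQ x x.2 this)
    calc Nat.card (Subgroup.normalizer (Subgroup.zpowers t : Set G)) ≤ Nat.card (G ⧸ Q) :=
          Nat.card_le_card_of_injective _ hinj
    _ = 6 := by rw [Nat.card_congr e0.toEquiv]; exact P3_card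
  have hMcard : Nat.card M = 6 := by rw [Nat.card_congr eM.toEquiv]; exact P3_card
  exact (Subgroup.eq_of_le_of_card_ge hMle (by rw [hMcard]; exact hcardN)).symm


/-- `Q` is characteristic in `G` -/
lemma Q_char {Q : Subgroup G} {m : ℕ} (hG : IsBiextraspecial G Q m) [Finite G] [Q.Normal]
    (e0 : (G ⧸ Q) ≃* P3) (α : MulAut G) : Q.map α.toMonoidHom = Q := by
  set N := Q.map α.toMonoidHom with hN
  set π := QuotientGroup.mk' Q with hπ
  haveI hNnorm : N.Normal := Subgroup.Normal.map hG.normal α.toMonoidHom α.surjective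
  have hcardN : Nat.card N = 2 ^ (2 + 2 * m) := by
    rw [← Nat.card_congr (Q.equivMapOfInjective α.toMonoidHom α.injective).toEquiv]
    exact hG.card_Q
  -- every element of the image of N in G/Q squares to 1
  have key : ∀ n ∈ N, e0 (π n) * e0 (π n) = 1 := by
    intro n hn
    have hord : orderOf n ∣ 2 ^ (2 + 2 * m) := by
      have hd := orderOf_dvd_natCard (⟨n, hn⟩ : N)
      rw [hcardN] at hd
      rwa [← orderOf_injective N.subtype N.subtype_injective ⟨n, hn⟩] at hd
    have hd2 : orderOf (e0 (π n)) ∣ 2 ^ (2 + 2 * m) :=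
      dvd_trans (dvd_trans (orderOf_map_dvd e0.toMonoidHom (π n)) (orderOf_map_dvd π n)) hord
    have hd6 : orderOf (e0 (π n)) ∣ 6 := by
      have := orderOf_dvd_natCard (e0 (π n))
      rwa [P3_card] at this
    have hdvd2 : orderOf (e0 (π n)) ∣ 2 := by
      obtain ⟨i, hi, hie⟩ := (Nat.dvd_prime_pow Nat.prime_two).mp hd2
      rw [hie]
      rcases i with _ | _ | i
      · exact one_dvd 2
      · exact dvd_refl 2
      · exfalso
        rw [hie] at hd6
        have h4 : (4 : ℕ) ∣ 6 := dvd_trans (by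
          have : (2:ℕ)^2 ∣ 2^(i+2) := pow_dvd_pow 2 (by omega)
          simpa using this) hd6
        norm_num at h4
    have := orderOf_dvd_iff_pow_eq_one.mp hdvd2
    rwa [pow_two] at this
  have hle : N ≤ Q := by
    intro n hn
    by_contra hnQ
    have hx1 : e0 (π n) ≠ 1 := by
      intro h
      have : π n = 1 := e0.injective (h.trans (map_one e0).symm)
      exact hnQ ((QuotientGroup.eq_one_iff n).mp this)
    obtain ⟨τ, hy3, hy1⟩ := P3_invol (e0 (π n)) (key n hn) hx1
    obtain ⟨ghat, hghat⟩ := e0.surjective τ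
    obtain ⟨g, rfl⟩ := QuotientGroup.mk'_surjective Q ghat
    have hwN : g * n * g⁻¹ * n ∈ N := mul_mem (hNnorm.conj_mem n hn g) hn
    have hwe : e0 (π (g * n * g⁻¹ * n)) = τ * e0 (π n) * τ⁻¹ * e0 (π n) := by
      rw [← hghat]
      simp only [map_mul, map_inv, hπ]
    have hww := key _ hwN
    rw [hwe] at hww
    rw [hww, one_mul] at hy3
    exact hy1 hy3
  exact Subgroup.eq_of_le_of_card_ge hle (by rw [hcardN, hG.card_Q])


/-- an automorphism stabilising a complement `L` agrees on `L` with conjugation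
by an element of `L` -/
lemma rel_aut {Q L : Subgroup G} [Q.Normal] (hL : Q.IsComplement' L)
    (e0 : (G ⧸ Q) ≃* P3) (β : MulAut G) (hβ : L.map β.toMonoidHom = L) :
    ∃ l ∈ L, ∀ x ∈ L, β x = l * x * l⁻¹ := by
  obtain ⟨e, -⟩ := compl_quot_equiv hL
  set eL : L ≃* P3 := e.trans e0 with heL
  set autoL : L ≃* L :=
    ((β : G ≃* G).subgroupMap L).trans (MulEquiv.subgroupCongr hβ) with hauto
  set ψ : MulAut P3 := (eL.symm.trans autoL).trans eL with hψ
  obtain ⟨σ, hσ⟩ := autP ψ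
  refine ⟨(eL.symm σ : G), (eL.symm σ).2, fun x hx => ?_⟩
  have h1 := hσ (eL ⟨x, hx⟩)
  rw [hψ] at h1
  simp only [MulEquiv.trans_apply, MulEquiv.symm_apply_apply] at h1
  have h2 : σ * eL ⟨x, hx⟩ * σ⁻¹ = eL (eL.symm σ * ⟨x, hx⟩ * (eL.symm σ)⁻¹) := by
    rw [map_mul, map_mul, map_inv, MulEquiv.apply_symm_apply]
  rw [h2] at h1
  have h3 : autoL ⟨x, hx⟩ = eL.symm σ * ⟨x, hx⟩ * (eL.symm σ)⁻¹ := eL.injective h1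
  have h4 := congrArg Subtype.val h3
  have h5 : (autoL ⟨x, hx⟩ : G) = β x := by
    rw [hauto]
    simp [MulEquiv.trans_apply, MulEquiv.subgroupCongr_apply,
      MulEquiv.coe_subgroupMap_apply]
    rfl
  rw [h5] at h4
  exact h4


lemma conj_smul_zpowers (g t : G) :
    (MulAut.conj g • Subgroup.zpowers t : Subgroup G) = Subgroup.zpowers (g * t * g⁻¹) := by
  rw [Subgroup.pointwise_smul_def]
  exact MonoidHom.map_zpowers (MulAut.conj g).toMonoidHom t

/-- every automorphism agrees on `L` with an inner automorphism -/
lemma aut_inner {Q L : Subgroup G} {m : ℕ} (hG : IsBiextraspecial G Q m) [Finite G]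
    [Q.Normal] (hL : Q.IsComplement' L) (e0 : (G ⧸ Q) ≃* P3)
    {tG : G} (htL : tG ∈ L) (hto : orderOf tG = 3) (α : MulAut G) :
    ∃ g : G, ∀ x ∈ L, α x = g * x * g⁻¹ := by
  haveI : Fact (Nat.Prime 3) := ⟨by norm_num⟩
  haveI : Finite (Sylow 3 G) :=
    Finite.of_injective (fun P : Sylow 3 G => (P : Set G))
      (fun P R h => Sylow.ext (SetLike.coe_injective (by exact h)))
  obtain ⟨e, -⟩ := compl_quot_equiv hL
  -- the 3-part of |G| is 3
  have hcardG : Nat.card G = 2 ^ (3 + 2 * m) * 3 := by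
    rw [← hL.card_mul, hG.card_Q,
      show Nat.card L = 6 by rw [Nat.card_congr (e.trans e0).toEquiv]; exact P3_card]
    ring
  have hfact : (Nat.card G).factorization 3 = 1 := by
    rw [hcardG, Nat.factorization_mul (by positivity) (by norm_num),
      Nat.Prime.factorization_pow (p := 2) Nat.prime_two,
      Nat.Prime.factorization (by norm_num)]
    simp [Finsupp.single_apply]
  have hto' : orderOf (α tG) = 3 := by rw [MulEquiv.orderOf_eq]; exact hto
  set S1 : Sylow 3 G := Sylow.ofCard (Subgroup.zpowers tG)
    (by rw [Nat.card_zpowers, hto, hfact, pow_one]) with hS1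
  set S2 : Sylow 3 G := Sylow.ofCard (Subgroup.zpowers (α tG))
    (by rw [Nat.card_zpowers, hto', hfact, pow_one]) with hS2
  obtain ⟨g, hg⟩ := MulAction.exists_smul_eq G S2 S1
  have hz : Subgroup.zpowers (g * α tG * g⁻¹) = Subgroup.zpowers tG := by
    have h1 := congrArg (fun P : Sylow 3 G => (P : Subgroup G)) hg
    rw [Sylow.coe_subgroup_smul, hS2, hS1, Sylow.coe_ofCard, Sylow.coe_ofCard,
      conj_smul_zpowers] at h1
    exact h1
  set β : MulAut G := MulAut.conj g * α with hβdef
  have hβhom : β.toMonoidHom = (MulAut.conj g).toMonoidHom.comp α.toMonoidHom := rfl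
  -- L.map β is a complement of Q
  have hC1 : Q.IsComplement' (L.map α.toMonoidHom) := by
    have := compl_map hL α
    rwa [Q_char hG e0 α] at this
  have hC2 : Q.IsComplement' ((L.map α.toMonoidHom).map (MulAut.conj g).toMonoidHom) := by
    have := compl_map hC1 (MulAut.conj g)
    rwa [Q_char hG e0 (MulAut.conj g)] at this
  have ht'' : g * α tG * g⁻¹ ∈ (L.map α.toMonoidHom).map (MulAut.conj g).toMonoidHom :=
    ⟨α tG, ⟨tG, htL, rfl⟩, rfl⟩
  have hord'' : orderOf (g * α tG * g⁻¹) = 3 := by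
    have : g * α tG * g⁻¹ = (MulAut.conj g) (α tG) := rfl
    rw [this, MulEquiv.orderOf_eq]; exact hto'
  have h2 : Subgroup.normalizer (Subgroup.zpowers (g * α tG * g⁻¹) : Set G)
      = (L.map α.toMonoidHom).map (MulAut.conj g).toMonoidHom :=
    compl_norm hG e0 hC2 ht'' hord''
  have h1 : Subgroup.normalizer (Subgroup.zpowers tG : Set G) = L := compl_norm hG e0 hL htL hto
  have hLβ : L.map β.toMonoidHom = L := by
    rw [hβhom, ← Subgroup.map_map, ← h2, hz, h1]
  obtain ⟨l, hlL, hlspec⟩ := rel_aut hL e0 β hLβ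
  refine ⟨g⁻¹ * l, fun x hx => ?_⟩
  have h := hlspec x hx
  have h2' : g * α x * g⁻¹ = l * x * l⁻¹ := h
  calc α x = g⁻¹ * (g * α x * g⁻¹) * g := by group
  _ = g⁻¹ * (l * x * l⁻¹) * g := by rw [h2']
  _ = (g⁻¹ * l) * x * (g⁻¹ * l)⁻¹ := by group

end Stmt17Aux

/-- for a biextraspecial group `G = Q:L` one has `Z(G) = 1`, `L` is
self-normalising, and `Out(G) = Aut(G)/Inn(G)` is isomorphic to the group
`C_{Aut(G)}(L)` of automorphisms of `G` centralising `L`. -/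
theorem stmt17 (G : Type*) [Group G] (Q L : Subgroup G) (m : ℕ)
    (hG : IsBiextraspecial G Q m) (hL : Q.IsComplement' L) :
    Subgroup.center G = ⊥ ∧
      Subgroup.normalizer (L : Set G) = L ∧
      Nonempty ((MulAut G ⧸ (MulAut.conj (G := G)).range) ≃* autCentralizer G L) := by
  classical
  haveI := hG.normal
  obtain ⟨e0⟩ := hG.quot_iso
  obtain ⟨e, -⟩ := Stmt17Aux.compl_quot_equiv hL
  set eL : L ≃* Stmt17Aux.P3 := e.trans e0 with heL
  haveI hQfin : Finite Q := Nat.finite_of_card_ne_zero (by rw [hG.card_Q]; positivity)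
  haveI hLfin : Finite L := Finite.of_equiv _ eL.toEquiv.symm
  haveI : Finite (↥(Q : Set G)) := hQfin
  haveI : Finite (↥(L : Set G)) := hLfin
  haveI hGfin : Finite G := Finite.of_equiv _ hL.equiv.symm
  -- an element of order 3 in L
  obtain ⟨c3, hc3⟩ := Stmt17Aux.P3_three
  set tL : L := eL.symm c3 with htLdef
  have htL : (tL : G) ∈ L := tL.2
  have hto : orderOf (tL : G) = 3 := by
    have h1 : orderOf (tL : G) = orderOf tL :=
      orderOf_injective L.subtype L.subtype_injective tL
    have h2 : orderOf tL = orderOf c3 := by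
      rw [htLdef]; exact MulEquiv.orderOf_eq eL.symm c3
    rw [h1, h2, hc3]
  -- PART 1 : trivial centre
  have part1 : Subgroup.center G = ⊥ := by
    rw [Subgroup.eq_bot_iff_forall]
    intro z hz
    rw [Subgroup.mem_center_iff] at hz
    have hzQ : z ∈ Q := by
      apply hG.center_faithful
      intro w hw
      rw [← hz w, mul_assoc, mul_inv_cancel, mul_one]
    exact hG.order_three_fpf _ hto z hzQ (by rw [hz (tL : G), mul_assoc,
      mul_inv_cancel, mul_one])
  -- PART 2 : L is self-normalising
  have part2 : Subgroup.normalizer (L : Set G) = L := by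
    apply le_antisymm
    · intro g hgN
      obtain ⟨⟨⟨q, hq⟩, ⟨l, hl⟩⟩, hg, -⟩ := hL.existsUnique g
      have hg' : q * l = g := hg
      have hqN : q ∈ Subgroup.normalizer (L : Set G) := by
        have hlN : l ∈ Subgroup.normalizer (L : Set G) := Subgroup.le_normalizer hl
        have h1 := mul_mem hgN (inv_mem hlN)
        rwa [← hg', mul_inv_cancel_right] at h1
      have hqcomm : ∀ y ∈ L, q * y * q⁻¹ = y := by
        intro y hy
        have h1 : q * y * q⁻¹ ∈ L := (Subgroup.mem_normalizer_iff.mp hqN y).mp hy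
        have h2 : q * y * q⁻¹ * y⁻¹ ∈ L := mul_mem h1 (inv_mem hy)
        have h3 : q * y * q⁻¹ * y⁻¹ ∈ Q := by
          have ha : y * q⁻¹ * y⁻¹ ∈ Q := hG.normal.conj_mem _ (inv_mem hq) y
          have hb := mul_mem hq ha
          have hc : q * (y * q⁻¹ * y⁻¹) = q * y * q⁻¹ * y⁻¹ := by group
          rwa [hc] at hb
        have h4 : q * y * q⁻¹ * y⁻¹ = 1 := Subgroup.disjoint_def.mp hL.disjoint h3 h2
        exact mul_inv_eq_one.mp h4
      have hq1 : q = 1 := by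
        apply hG.order_three_fpf _ hto q hq
        have h1 := hqcomm _ htL
        have h2 : q * (tL : G) = (tL : G) * q := by
          have := congrArg (· * q) h1
          simpa [mul_assoc] using this
        rw [← h2]; group
      rw [← hg', hq1, one_mul]; exact hl
    · exact Subgroup.le_normalizer
  refine ⟨part1, part2, ?_⟩
  -- PART 3 : Out(G) ≃ C_{Aut(G)}(L)
  have hconjfix : ∀ g : G, (∀ x ∈ L, g * x * g⁻¹ = x) → g = 1 := by
    intro g hgfix
    have hgN : g ∈ Subgroup.normalizer (L : Set G) := by
      rw [Subgroup.mem_normalizer_iff]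
      intro h
      constructor
      · intro hh; rw [hgfix h hh]; exact hh
      · intro hh
        have h1 := hgfix _ hh
        have h2 : g * h * g⁻¹ = h := by
          have h3 := congrArg (fun z => g⁻¹ * z * g) h1
          simpa [mul_assoc] using h3
        exact h2 ▸ hh
    have hgL : g ∈ L := part2 ▸ hgN
    have hcen : eL ⟨g, hgL⟩ = 1 := by
      apply Stmt17Aux.P3_center
      intro y
      obtain ⟨a, ha⟩ := eL.surjective y
      rw [← ha, ← map_mul, ← map_mul]
      congr 1
      apply Subtype.ext
      show g * (a : G) = (a : G) * g
      have h1 := hgfix (a : G) a.2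
      have h2 := congrArg (· * g) h1
      simpa [mul_assoc] using h2
    have hone : (⟨g, hgL⟩ : L) = 1 := by
      apply eL.injective; rw [hcen, map_one]
    exact congrArg Subtype.val hone
  set Inn := (MulAut.conj (G := G)).range with hInn
  set f : autCentralizer G L →* (MulAut G ⧸ Inn) :=
    (QuotientGroup.mk' Inn).comp (autCentralizer G L).subtype with hf
  have hinj : Function.Injective f := by
    rw [injective_iff_map_eq_one]
    intro γ hγ
    have h1 : (γ : MulAut G) ∈ Inn := (QuotientGroup.eq_one_iff _).mp hγ
    obtain ⟨g, hg⟩ := h1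
    have h2 : g = 1 := by
      apply hconjfix
      intro x hx
      have h3 := γ.2 x hx
      rw [← hg] at h3
      exact h3
    apply Subtype.ext
    rw [← hg, h2, map_one]; rfl
  have hsurj : Function.Surjective f := by
    intro y
    obtain ⟨α, rfl⟩ := QuotientGroup.mk'_surjective Inn y
    obtain ⟨g, hg⟩ := Stmt17Aux.aut_inner hG hL e0 htL hto α
    set γ : MulAut G := (MulAut.conj g)⁻¹ * α with hγdef
    have hγC : γ ∈ autCentralizer G L := by
      intro x hx
      show (MulAut.conj g)⁻¹ (α x) = x
      rw [hg x hx]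
      show (MulAut.conj g).symm (g * x * g⁻¹) = x
      rw [MulAut.conj_symm_apply]
      group
    refine ⟨⟨γ, hγC⟩, ?_⟩
    show (QuotientGroup.mk' Inn) γ = (QuotientGroup.mk' Inn) α
    rw [QuotientGroup.mk'_eq_mk']
    refine ⟨α⁻¹ * (MulAut.conj g) * α, ?_, by rw [hγdef]; group⟩
    have h1 : α⁻¹ * (MulAut.conj g) * (α⁻¹)⁻¹ ∈ Inn :=
      (innNormal G).conj_mem _ ⟨g, rfl⟩ α⁻¹
    rwa [inv_inv] at h1
  exact ⟨(MulEquiv.ofBijective f ⟨hinj, hsurj⟩).symm⟩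
end

section
/- Let G = Q:L be a biextraspecial group of rank m, t ∈ L an involution, and R = C_Q(t). Then the restriction map C_{Aut(G)}(L) → Aut(R), α ↦ α|_R, is a group isomorphism. -/
open scoped commutatorElement

set_option maxHeartbeats 4000000 in
set_option maxRecDepth 100000 in
/-- for a biextraspecial group `G = Q:L` of rank `m` and an
involution `t ∈ L`, restriction to the extraspecial subgroup `R = C_Q(t)` gives a
group isomorphism `C_{Aut(G)}(L) ≃ Aut(R)`. -/
theorem stmt18 (G : Type*) [Group G] (Q L : Subgroup G) (m : ℕ)
    (hG : IsBiextraspecial G Q m) (hL : Q.IsComplement' L)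
    (t : G) (ht : t ∈ L) (hot : orderOf t = 2) :
    ∃ f : autCentralizer G L →* MulAut (Subgroup.centralizer {t} ⊓ Q : Subgroup G),
      (∀ (α : autCentralizer G L)
          (x : (Subgroup.centralizer {t} ⊓ Q : Subgroup G)),
        ((f α) x : G) = (α : MulAut G) (x : G)) ∧
      Function.Bijective f := by
  classical
  obtain ⟨e₀⟩ := hG.quot_iso
  haveI hQn : Q.Normal := hG.normal
  set Z : Subgroup G := centerOf G Q with hZdef
  -- finiteness
  have hQfin : Finite Q := by
    have h1 : 0 < Nat.card Q := by rw [hG.card_Q]; positivity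
    exact (Nat.card_pos_iff.mp h1).2
  have hGQfin : Finite (G ⧸ Q) := Finite.of_equiv _ e₀.symm.toEquiv
  have hGfin : Finite G :=
    Finite.of_equiv _ (Subgroup.groupEquivQuotientProdSubgroup (s := Q)).symm
  -- basic center facts
  have hZQ : ∀ z ∈ Z, z ∈ Q := fun z hz => (Subgroup.mem_inf.mp hz).2
  have hzc : ∀ z ∈ Z, ∀ x ∈ Q, z * x = x * z := fun z hz x hx =>
    (Subgroup.mem_centralizer_iff.mp (Subgroup.mem_inf.mp hz).1 x hx).symm
  have hz2 : ∀ z ∈ Z, z * z = 1 := hG.center_exponent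
  have hzinv : ∀ z ∈ Z, z⁻¹ = z := fun z hz => inv_eq_of_mul_eq_one_right (hz2 z hz)
  have hconjQ : ∀ (g : G), ∀ x ∈ Q, g * x * g⁻¹ ∈ Q := fun g x hx => hQn.conj_mem x hx g
  have hZconj : ∀ (g : G), ∀ z ∈ Z, g * z * g⁻¹ ∈ Z := by
    intro g z hz
    refine Subgroup.mem_inf.mpr ⟨Subgroup.mem_centralizer_iff.mpr ?_, hconjQ g z (hZQ z hz)⟩
    intro x hx
    have hx' : g⁻¹ * x * g ∈ Q := by
      have := hconjQ g⁻¹ x hx; simpa using this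
    have h := hzc z hz _ hx'
    calc x * (g * z * g⁻¹) = g * ((g⁻¹ * x * g) * z) * g⁻¹ := by group
      _ = g * (z * (g⁻¹ * x * g)) * g⁻¹ := by rw [← h]
      _ = (g * z * g⁻¹) * x := by group
  have htt : t * t = 1 := by
    have := pow_orderOf_eq_one t; rwa [hot, pow_two] at this
  have htinv : t⁻¹ = t := inv_eq_of_mul_eq_one_right htt
  have htQ : t ∉ Q := by
    intro hmem
    have : t ∈ Q ⊓ L := ⟨hmem, ht⟩
    rw [hL.disjoint.eq_bot] at this
    have : t = 1 := by simpa using this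
    rw [this] at hot; simp at hot
  -- obtain s
  obtain ⟨s, hsL, hs3, hts⟩ : ∃ s, s ∈ L ∧ orderOf s = 3 ∧ t * s * t⁻¹ = s * s := by
    set ψ : L →* G ⧸ Q := (QuotientGroup.mk' Q).comp L.subtype with hψ
    have hinj : Function.Injective ψ := by
      rw [injective_iff_map_eq_one]
      intro a ha
      have h1 : (a : G) ∈ Q := (QuotientGroup.eq_one_iff _).mp ha
      have h2 : (a : G) ∈ Q ⊓ L := ⟨h1, a.2⟩
      rw [hL.disjoint.eq_bot] at h2
      exact Subtype.ext (by simpa using h2)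
    have hsurj : Function.Surjective ψ := by
      intro x
      obtain ⟨g, rfl⟩ := QuotientGroup.mk'_surjective Q x
      obtain ⟨⟨q, l⟩, h, -⟩ := hL.existsUnique g
      refine ⟨l, ?_⟩
      simp only [ψ, MonoidHom.comp_apply, QuotientGroup.mk'_apply, Subgroup.coe_subtype]
      rw [← h]
      have h1 : ((q : G) : G ⧸ Q) = 1 := (QuotientGroup.eq_one_iff _).mpr q.2
      rw [QuotientGroup.mk_mul, h1, one_mul]
    set E : L ≃* Equiv.Perm (Fin 3) := (MulEquiv.ofBijective ψ ⟨hinj, hsurj⟩).trans e₀ with hE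
    set τ : Equiv.Perm (Fin 3) := E ⟨t, ht⟩ with hτ
    have hτ2 : τ * τ = 1 := by
      rw [hτ, ← map_mul, ← map_one E]
      congr 1
      exact Subtype.ext htt
    have hτ1 : τ ≠ 1 := by
      intro h
      have h2 : (⟨t, ht⟩ : L) = 1 := E.injective (by rw [map_one]; exact h)
      have h3 : t = 1 := by simpa using congrArg Subtype.val h2
      rw [h3] at hot; simp at hot
    have hdec : ∀ τ' : Equiv.Perm (Fin 3), τ' * τ' = 1 → τ' ≠ 1 →
        ∃ σ, σ * σ * σ = 1 ∧ σ ≠ 1 ∧ τ' * σ * τ'⁻¹ = σ * σ := by decide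
    obtain ⟨σ, hσ3, hσ1, hτσ⟩ := hdec τ hτ2 hτ1
    refine ⟨((E.symm σ : L) : G), (E.symm σ).2, ?_, ?_⟩
    · rw [show ((E.symm σ : L) : G) = L.subtype (E.symm σ) from rfl,
        orderOf_injective L.subtype L.subtype_injective, MulEquiv.orderOf_eq E.symm]
      haveI : Fact (Nat.Prime 3) := ⟨by norm_num⟩
      refine orderOf_eq_prime ?_ hσ1
      rw [pow_succ, pow_two, hσ3]
    · have h1 : (⟨t, ht⟩ : L) * E.symm σ * (⟨t, ht⟩ : L)⁻¹ = E.symm σ * E.symm σ := by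
        apply E.injective
        rw [map_mul, map_mul, map_inv, map_mul, E.apply_symm_apply, ← hτ, hτσ]
      have := congrArg Subtype.val h1
      simpa [htinv] using this
  -- s basics
  have hss : s * s * s = 1 := by
    have := pow_orderOf_eq_one s; rwa [hs3, pow_succ, pow_two] at this
  have hsinv : s⁻¹ = s * s := inv_eq_of_mul_eq_one_right (by rw [← mul_assoc]; exact hss)
  have hsQ : s ∉ Q := by
    intro hmem
    have h2 : s ∈ Q ⊓ L := ⟨hmem, hsL⟩
    rw [hL.disjoint.eq_bot] at h2
    have h3 : s = 1 := by simpa using h2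
    rw [h3] at hs3; simp at hs3
  have hts1 : t * s = s * s * t := by
    have := hts
    calc t * s = t * s * t⁻¹ * t := by group
      _ = s * s * t := by rw [hts]
  have hts2 : t * (s * s) = s * t := by
    calc t * (s * s) = (t * s) * s := by group
      _ = (s * s * t) * s := by rw [hts1]
      _ = s * s * (t * s) := by group
      _ = s * s * (s * s * t) := by rw [hts1]
      _ = (s * s * s) * (s * t) := by group
      _ = s * t := by rw [hss]; group
  -- conjugation conversion lemmas
  have hconvB : ∀ p : G, t * (s * p * s⁻¹) * t⁻¹ = s * (s * (t * p * t⁻¹) * s⁻¹) * s⁻¹ := by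
    intro p
    calc t * (s * p * s⁻¹) * t⁻¹ = (t * s) * p * (t * s)⁻¹ := by group
      _ = (s * s * t) * p * (s * s * t)⁻¹ := by rw [hts1]
      _ = s * (s * (t * p * t⁻¹) * s⁻¹) * s⁻¹ := by group
  have hconvA : ∀ p : G, t * (s * (s * p * s⁻¹) * s⁻¹) * t⁻¹ = s * (t * p * t⁻¹) * s⁻¹ := by
    intro p
    calc t * (s * (s * p * s⁻¹) * s⁻¹) * t⁻¹ = (t * (s * s)) * p * (t * (s * s))⁻¹ := by group
      _ = (s * t) * p * (s * t)⁻¹ := by rw [hts2]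
      _ = s * (t * p * t⁻¹) * s⁻¹ := by group
  have hconj3 : ∀ p : G, s * (s * (s * p * s⁻¹) * s⁻¹) * s⁻¹ = p := by
    intro p
    calc s * (s * (s * p * s⁻¹) * s⁻¹) * s⁻¹ = (s * s * s) * p * (s * s * s)⁻¹ := by group
      _ = p := by rw [hss]; group
  have hconjmul : ∀ g a b : G, g * (a * b) * g⁻¹ = (g * a * g⁻¹) * (g * b * g⁻¹) := by
    intro g a b; group
  have hconjinv : ∀ g a : G, g * a⁻¹ * g⁻¹ = (g * a * g⁻¹)⁻¹ := by
    intro g a; group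
  have hsconj : ∀ z : G, s⁻¹ * z * s = s * (s * z * s⁻¹) * s⁻¹ := by
    intro z
    calc s⁻¹ * z * s = (s * s * s) * (s⁻¹ * z * s) * (s * s * s)⁻¹ := by rw [hss]; group
      _ = s * (s * z * s⁻¹) * s⁻¹ := by group
  -- the identity q q^s q^{s²} = 1
  have hN : ∀ q ∈ Q, q * (s * q * s⁻¹) * (s * (s * q * s⁻¹) * s⁻¹) = 1 := by
    have hfpf : ∀ u ∈ Q, s * u * s⁻¹ = u → u = 1 := fun u hu h =>
      hG.order_three_fpf s hs3 u hu h
    set θ : Q → Q := fun x => ⟨(x : G)⁻¹ * (s * (x : G) * s⁻¹),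
      Q.mul_mem (Q.inv_mem x.2) (hconjQ s _ x.2)⟩ with hθ
    have hθinj : Function.Injective θ := by
      intro x y hxy
      have h1 : (x : G)⁻¹ * (s * (x : G) * s⁻¹) = (y : G)⁻¹ * (s * (y : G) * s⁻¹) :=
        congrArg Subtype.val hxy
      have h2 : s * ((y : G) * (x : G)⁻¹) * s⁻¹ = (y : G) * (x : G)⁻¹ := by
        calc s * ((y : G) * (x : G)⁻¹) * s⁻¹
            = (s * (y : G) * s⁻¹) * (s * (x : G) * s⁻¹)⁻¹ := by group
          _ = ((y : G) * ((y : G)⁻¹ * (s * (y : G) * s⁻¹))) * (s * (x : G) * s⁻¹)⁻¹ := by group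
          _ = ((y : G) * ((x : G)⁻¹ * (s * (x : G) * s⁻¹))) * (s * (x : G) * s⁻¹)⁻¹ := by
              rw [← h1]
          _ = (y : G) * (x : G)⁻¹ := by group
      have h3 : (y : G) * (x : G)⁻¹ = 1 :=
        hfpf _ (Q.mul_mem y.2 (Q.inv_mem x.2)) h2
      have : (y : G) = (x : G) := by
        calc (y : G) = (y : G) * (x : G)⁻¹ * (x : G) := by group
          _ = (x : G) := by rw [h3]; group
      exact (Subtype.ext this).symm
    have hθsurj : Function.Surjective θ := Finite.injective_iff_surjective.mp hθinj
    intro q hq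
    obtain ⟨x, hx⟩ := hθsurj ⟨q, hq⟩
    have h1 : (x : G)⁻¹ * (s * (x : G) * s⁻¹) = q := congrArg Subtype.val hx
    set X : G := (x : G) with hX
    have h2 : s * q * s⁻¹ = (s * X * s⁻¹)⁻¹ * (s * (s * X * s⁻¹) * s⁻¹) := by
      rw [← h1]; group
    have h3 : s * (s * q * s⁻¹) * s⁻¹
        = (s * (s * X * s⁻¹) * s⁻¹)⁻¹ * X := by
      rw [h2, hconjmul, hconjinv, hconj3]
    rw [h3, h2, ← h1]; group
  -- commutator basics
  have hsw : ∀ x y : G, x * y = ⁅x, y⁆ * (y * x) := by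
    intro x y; rw [commutatorElement_def]; group
  have hcommZ : ∀ x ∈ Q, ∀ y ∈ Q, ⁅x, y⁆ ∈ Z := hG.comm_mem_center
  have hmove : ∀ z ∈ Z, ∀ p ∈ Q, ∀ w : G, p * (z * w) = z * (p * w) := by
    intro z hz p hp w
    rw [← mul_assoc, ← hzc z hz p hp, mul_assoc]
  have hconjcomm : ∀ g a b : G, g * ⁅a, b⁆ * g⁻¹ = ⁅g * a * g⁻¹, g * b * g⁻¹⁆ := by
    intro g a b; simp only [commutatorElement_def]; group
  have hB1 : ∀ a ∈ Q, ∀ b ∈ Q, ∀ c ∈ Q, ⁅a, b * c⁆ = ⁅a, b⁆ * ⁅a, c⁆ := by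
    intro a ha b hb c hc
    have hz : ⁅a, c⁆ ∈ Z := hcommZ a ha c hc
    have key : ⁅a, c⁆ * b⁻¹ = b⁻¹ * ⁅a, c⁆ := hzc _ hz _ (Q.inv_mem hb)
    calc ⁅a, b * c⁆ = a * b * a⁻¹ * (⁅a, c⁆ * b⁻¹) := by
          simp only [commutatorElement_def]; group
      _ = a * b * a⁻¹ * (b⁻¹ * ⁅a, c⁆) := by rw [key]
      _ = ⁅a, b⁆ * ⁅a, c⁆ := by simp only [commutatorElement_def]; group
  have hBinv1 : ∀ a ∈ Q, ∀ b ∈ Q, ⁅a, b⁻¹⁆ = ⁅a, b⁆⁻¹ := by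
    intro a ha b hb
    have h1 := hB1 a ha b hb b⁻¹ (Q.inv_mem hb)
    have h2 : ⁅a, b * b⁻¹⁆ = 1 := by simp [commutatorElement_def]
    rw [h2] at h1
    have h3 : ⁅a, b⁆ * ⁅a, b⁻¹⁆ = 1 := h1.symm
    calc ⁅a, b⁻¹⁆ = ⁅a, b⁆⁻¹ * (⁅a, b⁆ * ⁅a, b⁻¹⁆) := by group
      _ = ⁅a, b⁆⁻¹ := by rw [h3]; group
  -- abstract star computation
  have habs : ∀ x' X2' X3' y' Y2' Y3' : G, x' ∈ Q → X2' ∈ Q → X3' ∈ Q →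
      y' ∈ Q → Y2' ∈ Q → Y3' ∈ Q →
      x' * X2' * X3' = 1 → y' * Y2' * Y3' = 1 →
      (x' * y') * (X2' * Y2') * (X3' * Y3') = 1 →
      ⁅y', X2'⁆ * ⁅Y2', X3'⁆ * ⁅y', X3'⁆ = 1 := by
    intro x X2 X3 y Y2 Y3 hx hX2 hX3 hy hY2 hY3 hNx hNy h6
    have hc1 : ⁅y, X2⁆ ∈ Z := hcommZ y hy X2 hX2
    have hc2 : ⁅y, X3⁆ ∈ Z := hcommZ y hy X3 hX3
    have hc3 : ⁅Y2, X3⁆ ∈ Z := hcommZ Y2 hY2 X3 hX3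
    have key : (x * y) * (X2 * Y2) * (X3 * Y3)
        = (⁅y, X2⁆ * ⁅Y2, X3⁆ * ⁅y, X3⁆) * ((x * X2 * X3) * (y * (Y2 * Y3))) := by
      calc (x * y) * (X2 * Y2) * (X3 * Y3)
          = x * ((y * X2) * ((Y2 * X3) * Y3)) := by group
        _ = x * ((⁅y, X2⁆ * (X2 * y)) * ((⁅Y2, X3⁆ * (X3 * Y2)) * Y3)) := by
            rw [← hsw y X2, ← hsw Y2 X3]
        _ = x * (⁅y, X2⁆ * ((X2 * y) * ((⁅Y2, X3⁆ * (X3 * Y2)) * Y3))) := by group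
        _ = ⁅y, X2⁆ * (x * ((X2 * y) * ((⁅Y2, X3⁆ * (X3 * Y2)) * Y3))) := by
            rw [hmove _ hc1 x hx]
        _ = ⁅y, X2⁆ * ((x * X2) * (y * (⁅Y2, X3⁆ * ((X3 * Y2) * Y3)))) := by group
        _ = ⁅y, X2⁆ * ((x * X2) * (⁅Y2, X3⁆ * (y * ((X3 * Y2) * Y3)))) := by
            rw [hmove _ hc3 y hy]
        _ = ⁅y, X2⁆ * (⁅Y2, X3⁆ * ((x * X2) * (y * ((X3 * Y2) * Y3)))) := by
            rw [hmove _ hc3 (x * X2) (Q.mul_mem hx hX2)]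
        _ = ⁅y, X2⁆ * (⁅Y2, X3⁆ * ((x * X2) * ((y * X3) * (Y2 * Y3)))) := by group
        _ = ⁅y, X2⁆ * (⁅Y2, X3⁆ * ((x * X2) * ((⁅y, X3⁆ * (X3 * y)) * (Y2 * Y3)))) := by
            rw [← hsw y X3]
        _ = ⁅y, X2⁆ * (⁅Y2, X3⁆ * ((x * X2) * (⁅y, X3⁆ * ((X3 * y) * (Y2 * Y3))))) := by
            group
        _ = ⁅y, X2⁆ * (⁅Y2, X3⁆ * (⁅y, X3⁆ * ((x * X2) * ((X3 * y) * (Y2 * Y3))))) := by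
            rw [hmove _ hc2 (x * X2) (Q.mul_mem hx hX2)]
        _ = (⁅y, X2⁆ * ⁅Y2, X3⁆ * ⁅y, X3⁆) * ((x * X2 * X3) * (y * (Y2 * Y3))) := by
            group
    rw [h6, hNx] at key
    have hNy' : y * (Y2 * Y3) = 1 := by rw [← hNy]; group
    rw [hNy'] at key
    simpa using key.symm
  -- THE key identity: s⁅y,x^s⁆s⁻¹ = ⁅y,x⁆
  have hKEY : ∀ x ∈ Q, ∀ y ∈ Q, s * ⁅y, s * x * s⁻¹⁆ * s⁻¹ = ⁅y, x⁆ := by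
    intro x hx y hy
    have hX2 : s * x * s⁻¹ ∈ Q := hconjQ s x hx
    have hX3 : s * (s * x * s⁻¹) * s⁻¹ ∈ Q := hconjQ s _ hX2
    have hY2 : s * y * s⁻¹ ∈ Q := hconjQ s y hy
    have hY3 : s * (s * y * s⁻¹) * s⁻¹ ∈ Q := hconjQ s _ hY2
    have hNx := hN x hx
    have hNy := hN y hy
    have h6 : ((x * y) * (s * (x * y) * s⁻¹) * (s * (s * (x * y) * s⁻¹) * s⁻¹)) = 1 :=
      hN _ (Q.mul_mem hx hy)
    rw [hconjmul s x y] at h6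
    rw [hconjmul s (s * x * s⁻¹) (s * y * s⁻¹)] at h6
    have hstar := habs x (s * x * s⁻¹) (s * (s * x * s⁻¹) * s⁻¹) y (s * y * s⁻¹)
      (s * (s * y * s⁻¹) * s⁻¹) hx hX2 hX3 hy hY2 hY3 (by rw [← hNx])
      (by rw [← hNy]) (by rw [← h6])
    -- now  c₁ c₃ c₂ = 1 with c₃ = s c₁ s⁻¹, c₂ = c₁⁻¹ ⁅y,x⁆⁻¹
    have hc3eq : ⁅s * y * s⁻¹, s * (s * x * s⁻¹) * s⁻¹⁆ = s * ⁅y, s * x * s⁻¹⁆ * s⁻¹ :=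
      (hconjcomm s y (s * x * s⁻¹)).symm
    have hX3eq : s * (s * x * s⁻¹) * s⁻¹ = (s * x * s⁻¹)⁻¹ * x⁻¹ := by
      have h := hNx
      calc s * (s * x * s⁻¹) * s⁻¹
          = (x * (s * x * s⁻¹))⁻¹ * (x * (s * x * s⁻¹) * (s * (s * x * s⁻¹) * s⁻¹)) := by
            group
        _ = (x * (s * x * s⁻¹))⁻¹ * 1 := by rw [← h]
        _ = (s * x * s⁻¹)⁻¹ * x⁻¹ := by group
    have hc2eq : ⁅y, s * (s * x * s⁻¹) * s⁻¹⁆ = ⁅y, s * x * s⁻¹⁆⁻¹ * ⁅y, x⁆⁻¹ := by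
      rw [hX3eq, hB1 y hy _ (Q.inv_mem hX2) _ (Q.inv_mem hx),
        hBinv1 y hy _ hX2, hBinv1 y hy x hx]
    rw [hc3eq, hc2eq] at hstar
    have hc1 : ⁅y, s * x * s⁻¹⁆ ∈ Z := hcommZ y hy _ hX2
    have hcs : s * ⁅y, s * x * s⁻¹⁆ * s⁻¹ ∈ Z := hZconj s _ hc1
    have hcomm : ⁅y, s * x * s⁻¹⁆ * (s * ⁅y, s * x * s⁻¹⁆ * s⁻¹)
        = (s * ⁅y, s * x * s⁻¹⁆ * s⁻¹) * ⁅y, s * x * s⁻¹⁆ :=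
      (hzc _ hcs _ (hZQ _ hc1)).symm
    have final : (s * ⁅y, s * x * s⁻¹⁆ * s⁻¹) * ⁅y, x⁆⁻¹ = 1 := by
      calc (s * ⁅y, s * x * s⁻¹⁆ * s⁻¹) * ⁅y, x⁆⁻¹
          = ((s * ⁅y, s * x * s⁻¹⁆ * s⁻¹) * ⁅y, s * x * s⁻¹⁆) *
              (⁅y, s * x * s⁻¹⁆⁻¹ * ⁅y, x⁆⁻¹) := by group
        _ = (⁅y, s * x * s⁻¹⁆ * (s * ⁅y, s * x * s⁻¹⁆ * s⁻¹)) *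
              (⁅y, s * x * s⁻¹⁆⁻¹ * ⁅y, x⁆⁻¹) := by rw [hcomm]
        _ = 1 := by rw [← hstar]
    calc s * ⁅y, s * x * s⁻¹⁆ * s⁻¹
        = ((s * ⁅y, s * x * s⁻¹⁆ * s⁻¹) * ⁅y, x⁆⁻¹) * ⁅y, x⁆ := by group
      _ = ⁅y, x⁆ := by rw [final]; group
  -- corollaries of hKEY
  have hKEYr : ∀ x ∈ Q, ∀ y ∈ Q, ⁅y, s * x * s⁻¹⁆ = s⁻¹ * ⁅y, x⁆ * s := by
    intro x hx y hy
    rw [← hKEY x hx y hy]; group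
  have hKEY2 : ∀ u ∈ Q, ∀ v ∈ Q, ⁅s * u * s⁻¹, v⁆ = s⁻¹ * ⁅u, v⁆ * s := by
    intro u hu v hv
    have h1 : ⁅s * u * s⁻¹, v⁆ = ⁅v, s * u * s⁻¹⁆⁻¹ := (commutatorElement_inv v _).symm
    rw [h1, hKEYr u hu v hv, ← commutatorElement_inv u v]; group
  have hzsq : ∀ z ∈ Z, s * (s * z * s⁻¹) * s⁻¹ = z * (s * z * s⁻¹) := by
    intro z hz
    have h := hN z (hZQ z hz)
    have h1 : s * (s * z * s⁻¹) * s⁻¹ = (s * z * s⁻¹)⁻¹ * z⁻¹ := by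
      calc s * (s * z * s⁻¹) * s⁻¹
          = (z * (s * z * s⁻¹))⁻¹ * (z * (s * z * s⁻¹) * (s * (s * z * s⁻¹) * s⁻¹)) := by
            group
        _ = (z * (s * z * s⁻¹))⁻¹ * 1 := by rw [← h]
        _ = (s * z * s⁻¹)⁻¹ * z⁻¹ := by group
    rw [h1, hzinv _ (hZconj s z hz), hzinv z hz, hzc _ (hZconj s z hz) z (hZQ z hz)]
  have hSC : ∀ u ∈ Q, (s * u * s⁻¹) * u = u * (s * u * s⁻¹) := by
    intro u hu
    have h1 : ⁅s * u * s⁻¹, u⁆ = 1 := by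
      rw [hKEY2 u hu u hu, commutatorElement_self]; group
    exact commutatorElement_eq_one_iff_mul_comm.mp h1
  -- the subgroup R
  set Rs : Subgroup G := Subgroup.centralizer {t} ⊓ Q with hRsdef
  have hRsQ : ∀ x ∈ Rs, x ∈ Q := fun x hx => (Subgroup.mem_inf.mp hx).2
  have hRst : ∀ x ∈ Rs, t * x * t⁻¹ = x := by
    intro x hx
    have h1 := Subgroup.mem_centralizer_iff.mp (Subgroup.mem_inf.mp hx).1 t rfl
    calc t * x * t⁻¹ = (t * x) * t⁻¹ := by group
      _ = (x * t) * t⁻¹ := by rw [h1]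
      _ = x := by group
  have hRsmem : ∀ x, x ∈ Q → t * x * t⁻¹ = x → x ∈ Rs := by
    intro x hxQ hfix
    refine Subgroup.mem_inf.mpr ⟨Subgroup.mem_centralizer_iff.mpr ?_, hxQ⟩
    intro g hg
    rw [Set.mem_singleton_iff] at hg
    subst hg
    calc g * x = g * x * g⁻¹ * g := by group
      _ = x * g := by rw [hfix]
  have hRRs : ∀ u ∈ Rs, ∀ r ∈ Rs, u = s * r * s⁻¹ → u = 1 := by
    intro u hu r hr hur
    have h1 : t * u = u * t := by
      have := hRst u hu
      calc t * u = t * u * t⁻¹ * t := by group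
        _ = u * t := by rw [this]
    have h2 : (s * t * s⁻¹) * u = u * (s * t * s⁻¹) := by
      have hrt := hRst r hr
      have e1 : (s * t * s⁻¹) * u * (s * t * s⁻¹)⁻¹ = s * (t * r * t⁻¹) * s⁻¹ := by
        rw [hur]; group
      rw [hrt] at e1
      rw [← hur] at e1
      calc (s * t * s⁻¹) * u = ((s * t * s⁻¹) * u * (s * t * s⁻¹)⁻¹) * (s * t * s⁻¹) := by
            group
        _ = u * (s * t * s⁻¹) := by rw [e1]
    have h3 : t * (s * t * s⁻¹) = s := by
      calc t * (s * t * s⁻¹) = (t * s) * t * s⁻¹ := by group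
        _ = (s * s * t) * t * s⁻¹ := by rw [hts1]
        _ = s * s * (t * t) * s⁻¹ := by group
        _ = s * s * s⁻¹ := by rw [htt]; group
        _ = s := by group
    have h4 : s * u = u * s := by
      calc s * u = (t * (s * t * s⁻¹)) * u := by rw [h3]
        _ = t * ((s * t * s⁻¹) * u) := by group
        _ = t * (u * (s * t * s⁻¹)) := by rw [h2]
        _ = (t * u) * (s * t * s⁻¹) := by group
        _ = (u * t) * (s * t * s⁻¹) := by rw [h1]
        _ = u * (t * (s * t * s⁻¹)) := by group
        _ = u * s := by rw [h3]
    have h5 : s * u * s⁻¹ = u := by rw [h4]; group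
    exact hG.order_three_fpf s hs3 u (hRsQ u hu) h5
  have hU : ∀ x₁ x₂ y₁ y₂ : G, x₁ ∈ Rs → x₂ ∈ Rs → y₁ ∈ Rs → y₂ ∈ Rs →
      x₁ * (s * x₂ * s⁻¹) = y₁ * (s * y₂ * s⁻¹) → x₁ = y₁ ∧ x₂ = y₂ := by
    intro x₁ x₂ y₁ y₂ hx₁ hx₂ hy₁ hy₂ heq
    have h1 : y₁⁻¹ * x₁ = s * (y₂ * x₂⁻¹) * s⁻¹ := by
      calc y₁⁻¹ * x₁ = y₁⁻¹ * (x₁ * (s * x₂ * s⁻¹)) * (s * x₂ * s⁻¹)⁻¹ := by group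
        _ = y₁⁻¹ * (y₁ * (s * y₂ * s⁻¹)) * (s * x₂ * s⁻¹)⁻¹ := by rw [heq]
        _ = s * (y₂ * x₂⁻¹) * s⁻¹ := by group
    have h2 : y₁⁻¹ * x₁ = 1 :=
      hRRs _ (Rs.mul_mem (Rs.inv_mem hy₁) hx₁) _ (Rs.mul_mem hy₂ (Rs.inv_mem hx₂)) h1
    have h3 : x₁ = y₁ := by
      calc x₁ = y₁ * (y₁⁻¹ * x₁) := by group
        _ = y₁ := by rw [h2]; group
    refine ⟨h3, ?_⟩
    rw [h3] at heq
    have h4 : s * x₂ * s⁻¹ = s * y₂ * s⁻¹ := by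
      calc s * x₂ * s⁻¹ = y₁⁻¹ * (y₁ * (s * x₂ * s⁻¹)) := by group
        _ = y₁⁻¹ * (y₁ * (s * y₂ * s⁻¹)) := by rw [heq]
        _ = s * y₂ * s⁻¹ := by group
    calc x₂ = s⁻¹ * (s * x₂ * s⁻¹) * s := by group
      _ = s⁻¹ * (s * y₂ * s⁻¹) * s := by rw [h4]
      _ = y₂ := by group
  -- two nontrivial t-fixed central elements coincide
  have hA2 : ∀ a b : G, a ∈ Z → b ∈ Z → t * a * t⁻¹ = a → t * b * t⁻¹ = b →
      a ≠ 1 → b ≠ 1 → a = b := by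
    intro a b haZ hbZ hat hbt ha1 hb1
    by_contra hne
    have habZ : a * b ∈ Z := Z.mul_mem haZ hbZ
    have hab1 : a * b ≠ 1 := by
      intro h
      have hb' : b = a⁻¹ := by
        calc b = a⁻¹ * (a * b) := by group
          _ = a⁻¹ := by rw [h]; group
      exact hne (hb'.trans (hzinv a haZ)).symm
    have haba : a * b ≠ a := by
      intro h
      refine hb1 ?_
      calc b = a⁻¹ * (a * b) := by group
        _ = a⁻¹ * a := by rw [h]
        _ = 1 := by group
    have habb : a * b ≠ b := by
      intro h
      refine ha1 ?_
      calc a = (a * b) * b⁻¹ := by group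
        _ = b * b⁻¹ := by rw [h]
        _ = 1 := by group
    -- enumerate Z
    haveI : Finite Z := by
      have h1 : 0 < Nat.card Z := by rw [hG.card_center]; norm_num
      exact (Nat.card_pos_iff.mp h1).2
    haveI : Fintype Z := Fintype.ofFinite _
    set za : Z := ⟨a, haZ⟩
    set zb : Z := ⟨b, hbZ⟩
    set zab : Z := ⟨a * b, habZ⟩
    have hu : ({1, za, zb, zab} : Finset Z) = Finset.univ := by
      apply Finset.eq_univ_of_card
      rw [← Nat.card_eq_fintype_card, hG.card_center]
      have d1 : (1 : Z) ≠ za := fun h => ha1 (congrArg Subtype.val h).symm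
      have d2 : (1 : Z) ≠ zb := fun h => hb1 (congrArg Subtype.val h).symm
      have d3 : (1 : Z) ≠ zab := fun h => hab1 (congrArg Subtype.val h).symm
      have d4 : za ≠ zb := fun h => hne (congrArg Subtype.val h)
      have d5 : za ≠ zab := fun h => haba (congrArg Subtype.val h).symm
      have d6 : zb ≠ zab := fun h => habb (congrArg Subtype.val h).symm
      rw [Finset.card_insert_of_notMem (by simp [d1, d2, d3]),
        Finset.card_insert_of_notMem (by simp [d4, d5]),
        Finset.card_insert_of_notMem (by simp [d6]), Finset.card_singleton]
    have hall : ∀ z ∈ Z, t * z * t⁻¹ = z := by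
      intro z hz
      have hmem : (⟨z, hz⟩ : Z) ∈ ({1, za, zb, zab} : Finset Z) := by
        rw [hu]; exact Finset.mem_univ _
      simp only [Finset.mem_insert, Finset.mem_singleton] at hmem
      rcases hmem with h | h | h | h
      · have : z = 1 := congrArg Subtype.val h
        rw [this]; group
      · have : z = a := congrArg Subtype.val h
        rw [this]; exact hat
      · have : z = b := congrArg Subtype.val h
        rw [this]; exact hbt
      · have : z = a * b := congrArg Subtype.val h
        rw [this, hconjmul, hat, hbt]
    exact htQ (hG.center_faithful t hall)
  -- z * z^{s²} = z^s for central z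
  have hzsq2 : ∀ z ∈ Z, s * (s * z * s⁻¹) * s⁻¹ = z * (s * z * s⁻¹) := hzsq
  have hzNs : ∀ z ∈ Z, z * (s * (s * z * s⁻¹) * s⁻¹) = s * z * s⁻¹ := by
    intro z hz
    rw [hzsq2 z hz, ← mul_assoc, hz2 z hz, one_mul]
  -- generic fixing lemma : if t u t⁻¹ = u z' with z' central t-fixed, then u (s z' s⁻¹) is t-fixed
  have hfix : ∀ u' z' : G, z' ∈ Z → z' = u'⁻¹ * (t * u' * t⁻¹) → t * z' * t⁻¹ = z' →
      t * (u' * (s * z' * s⁻¹)) * t⁻¹ = u' * (s * z' * s⁻¹) := by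
    intro u' z' hz' hdef hfixz
    have h1 : t * u' * t⁻¹ = u' * z' := by
      rw [hdef]; group
    have h2 : t * (s * z' * s⁻¹) * t⁻¹ = s * (s * z' * s⁻¹) * s⁻¹ := by
      rw [hconvB z', hfixz]
    calc t * (u' * (s * z' * s⁻¹)) * t⁻¹
        = (t * u' * t⁻¹) * (t * (s * z' * s⁻¹) * t⁻¹) := hconjmul t u' _
      _ = (u' * z') * (s * (s * z' * s⁻¹) * s⁻¹) := by rw [h1, h2]
      _ = u' * (z' * (s * (s * z' * s⁻¹) * s⁻¹)) := by group
      _ = u' * (s * z' * s⁻¹) := by rw [hzNs z' hz']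
  -- explicit decomposition of central elements
  have hZD : ∀ z ∈ Z, ∃ e₁ e₂ : G, e₁ ∈ Rs ∧ e₂ ∈ Rs ∧ e₁ ∈ Z ∧ e₂ ∈ Z ∧
      z = e₁ * (s * e₂ * s⁻¹) := by
    intro z hz
    have hzt : t * z * t⁻¹ ∈ Z := hZconj t z hz
    set e₂ : G := z * (t * z * t⁻¹) with he₂
    have he₂Z : e₂ ∈ Z := Z.mul_mem hz hzt
    have he₂t : t * e₂ * t⁻¹ = e₂ := by
      have h1 : t * (t * z * t⁻¹) * t⁻¹ = z := by
        calc t * (t * z * t⁻¹) * t⁻¹ = (t * t) * z * (t * t)⁻¹ := by group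
          _ = z := by rw [htt]; group
      calc t * e₂ * t⁻¹ = (t * z * t⁻¹) * (t * (t * z * t⁻¹) * t⁻¹) := by
            rw [he₂, hconjmul]
        _ = (t * z * t⁻¹) * z := by rw [h1]
        _ = z * (t * z * t⁻¹) := hzc _ hzt z (hZQ z hz)
        _ = e₂ := he₂.symm
    set e₁ : G := z * (s * e₂ * s⁻¹) with he₁
    have he₂sZ : s * e₂ * s⁻¹ ∈ Z := hZconj s _ he₂Z
    have he₁Z : e₁ ∈ Z := Z.mul_mem hz he₂sZ
    have he₁t : t * e₁ * t⁻¹ = e₁ := by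
      have h2 : t * (s * e₂ * s⁻¹) * t⁻¹ = s * (s * e₂ * s⁻¹) * s⁻¹ := by
        rw [hconvB e₂, he₂t]
      calc t * e₁ * t⁻¹ = (t * z * t⁻¹) * (t * (s * e₂ * s⁻¹) * t⁻¹) := by
            rw [he₁, hconjmul]
        _ = (t * z * t⁻¹) * (s * (s * e₂ * s⁻¹) * s⁻¹) := by rw [h2]
        _ = (t * z * t⁻¹) * (e₂ * (s * e₂ * s⁻¹)) := by rw [hzsq2 e₂ he₂Z]
        _ = ((t * z * t⁻¹) * e₂) * (s * e₂ * s⁻¹) := by group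
        _ = ((t * z * t⁻¹) * (z * (t * z * t⁻¹))) * (s * e₂ * s⁻¹) := by rw [he₂]
        _ = (z * ((t * z * t⁻¹) * (t * z * t⁻¹))) * (s * e₂ * s⁻¹) := by
            have hstep : (t * z * t⁻¹) * (z * (t * z * t⁻¹))
                = z * ((t * z * t⁻¹) * (t * z * t⁻¹)) := by
              rw [← mul_assoc, hzc _ hzt z (hZQ z hz), mul_assoc]
            rw [hstep]
        _ = z * (s * e₂ * s⁻¹) := by rw [hz2 _ hzt]; group
        _ = e₁ := he₁.symm
    refine ⟨e₁, e₂, hRsmem e₁ (hZQ _ he₁Z) he₁t, hRsmem e₂ (hZQ _ he₂Z) he₂t,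
      he₁Z, he₂Z, ?_⟩
    calc z = z * (s * (e₂ * e₂) * s⁻¹) := by rw [hz2 e₂ he₂Z]; group
      _ = z * ((s * e₂ * s⁻¹) * (s * e₂ * s⁻¹)) := by rw [hconjmul]
      _ = e₁ * (s * e₂ * s⁻¹) := by rw [he₁]; group
  -- quotient by the centre
  haveI hZnormal : Z.Normal := ⟨fun n hn g => hZconj g n hn⟩
  set π : G →* G ⧸ Z := QuotientGroup.mk' Z with hπdef
  have hker : ∀ g ∈ Z, π g = 1 := fun g hg => (QuotientGroup.eq_one_iff g).mpr hg
  have hπc : ∀ p ∈ Q, ∀ p' ∈ Q, π p * π p' = π p' * π p := by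
    intro p hp p' hp'
    calc π p * π p' = π (p * p') := (map_mul π p p').symm
      _ = π (⁅p, p'⁆ * (p' * p)) := by rw [← hsw p p']
      _ = π ⁅p, p'⁆ * (π p' * π p) := by rw [map_mul, map_mul]
      _ = π p' * π p := by rw [hker _ (hcommZ p hp p' hp'), one_mul]
  have hπ2 : ∀ p ∈ Q, π p * π p = 1 := by
    intro p hp
    rw [← map_mul]
    exact hker _ (hG.sq_mem_center p hp)
  have hπinv : ∀ p ∈ Q, (π p)⁻¹ = π p := fun p hp => inv_eq_of_mul_eq_one_right (hπ2 p hp)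
  have hswapq : ∀ u v w : G ⧸ Z, u * v = v * u → u * (v * w) = v * (u * w) := by
    intro u v w h; rw [← mul_assoc, h, mul_assoc]
  -- abstract quotient computation
  have hπcalc : ∀ A1 A2 A3 B1 B2 B3 : G ⧸ Z, A1 * A2 * A3 = 1 → B1 * B2 * B3 = 1 →
      B3 * A1 = A1 * B3 → B1 * A1 = A1 * B1 → B3 * B2 = B2 * B3 →
      A2 * A1 = A1 * A2 → A3 * A1 = A1 * A3 → A3 * A2 = A2 * A3 →
      A1⁻¹ = A1 → A3⁻¹ = A3 → B3⁻¹ = B3 →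
      ((A2 * B1)⁻¹ * A3)⁻¹ * ((A1 * B3)⁻¹ * B2) = 1 := by
    intro A1 A2 A3 B1 B2 B3 hA hB c1 c2 c3 c4 c5 c6 i1 i3 ib3
    have e1 : ((A2 * B1)⁻¹ * A3)⁻¹ * ((A1 * B3)⁻¹ * B2)
        = A3⁻¹ * (A2 * (B1 * (B3⁻¹ * (A1⁻¹ * B2)))) := by group
    rw [e1, i1, i3, ib3]
    calc A3 * (A2 * (B1 * (B3 * (A1 * B2))))
        = A3 * (A2 * (B1 * (A1 * (B3 * B2)))) := by rw [hswapq B3 A1 B2 c1]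
      _ = A3 * (A2 * (A1 * (B1 * (B3 * B2)))) := by rw [hswapq B1 A1 (B3 * B2) c2]
      _ = A3 * (A2 * (A1 * (B1 * (B2 * B3)))) := by rw [c3]
      _ = A3 * (A2 * (A1 * 1)) := by rw [show B1 * (B2 * B3) = 1 by rw [← hB]; group]
      _ = A3 * (A1 * A2) := by rw [mul_one, ← c4]
      _ = A1 * (A3 * A2) := by rw [← mul_assoc, c5, mul_assoc]
      _ = A1 * (A2 * A3) := by rw [c6]
      _ = 1 := by rw [← hA]; group
  -- existence of the decomposition
  have hX : ∀ q ∈ Q, ∃ r₁ r₂ : G, r₁ ∈ Rs ∧ r₂ ∈ Rs ∧ q = r₁ * (s * r₂ * s⁻¹) := by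
    intro q hq
    have hqtQ : t * q * t⁻¹ ∈ Q := hconjQ t q hq
    have hA2Q : s * q * s⁻¹ ∈ Q := hconjQ s q hq
    have hA3Q : s * (s * q * s⁻¹) * s⁻¹ ∈ Q := hconjQ s _ hA2Q
    have hB2Q : s * (t * q * t⁻¹) * s⁻¹ ∈ Q := hconjQ s _ hqtQ
    have hB3Q : s * (s * (t * q * t⁻¹) * s⁻¹) * s⁻¹ ∈ Q := hconjQ s _ hB2Q
    set u : G := (s * (s * q * s⁻¹) * s⁻¹) * (s * (t * q * t⁻¹) * s⁻¹) with hu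
    have huQ : u ∈ Q := Q.mul_mem hA3Q hB2Q
    have htqt : t * (t * q * t⁻¹) * t⁻¹ = q := by
      calc t * (t * q * t⁻¹) * t⁻¹ = (t * t) * q * (t * t)⁻¹ := by group
        _ = q := by rw [htt]; group
    have h2 : t * (s * (t * q * t⁻¹) * s⁻¹) * t⁻¹ = s * (s * q * s⁻¹) * s⁻¹ := by
      have h := hconvB (t * q * t⁻¹)
      rw [htqt] at h
      exact h
    have hut : t * u * t⁻¹
        = (s * (t * q * t⁻¹) * s⁻¹) * (s * (s * q * s⁻¹) * s⁻¹) := by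
      rw [hu, hconjmul, hconvA q, h2]
    set z1 : G := u⁻¹ * (t * u * t⁻¹) with hz1
    have hz1Z : z1 ∈ Z := by
      have e : z1 = ⁅(s * (t * q * t⁻¹) * s⁻¹)⁻¹, (s * (s * q * s⁻¹) * s⁻¹)⁻¹⁆ := by
        rw [hz1, hut, hu]
        simp only [commutatorElement_def]
        group
      rw [e]
      exact hcommZ _ (Q.inv_mem hB2Q) _ (Q.inv_mem hA3Q)
    have hz1t : t * z1 * t⁻¹ = z1 := by
      have e1 : t * z1 * t⁻¹ = (t * u * t⁻¹)⁻¹ * ((t * t) * u * (t * t)⁻¹) := by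
        rw [hz1]; group
      rw [htt] at e1
      have e2 : (t * u * t⁻¹)⁻¹ * (1 * u * 1⁻¹) = z1⁻¹ := by rw [hz1]; group
      rw [e1, e2, hzinv z1 hz1Z]
    set r₁ : G := u * (s * z1 * s⁻¹) with hr₁
    have hr₁t : t * r₁ * t⁻¹ = r₁ := hfix u z1 hz1Z hz1 hz1t
    have hr₁Q : r₁ ∈ Q := Q.mul_mem huQ (hconjQ s z1 (hZQ z1 hz1Z))
    have hr₁Rs : r₁ ∈ Rs := hRsmem r₁ hr₁Q hr₁t
    set x : G := s * (s * (r₁⁻¹ * q) * s⁻¹) * s⁻¹ with hx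
    have hxQ : x ∈ Q := hconjQ s _ (hconjQ s _ (Q.mul_mem (Q.inv_mem hr₁Q) hq))
    have hxs : s * x * s⁻¹ = r₁⁻¹ * q := by rw [hx]; exact hconj3 _
    -- t-conjugate of x
    have hr₁invt : t * r₁⁻¹ * t⁻¹ = r₁⁻¹ := by
      rw [hconjinv, hr₁t]
    have hxt : t * x * t⁻¹ = s * (r₁⁻¹ * (t * q * t⁻¹)) * s⁻¹ := by
      rw [hx, hconvA (r₁⁻¹ * q), hconjmul t r₁⁻¹ q, hr₁invt]
    set z3 : G := x⁻¹ * (t * x * t⁻¹) with hz3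
    -- π-level computation that z3 is central
    have hz1s2Z : s * (s * z1 * s⁻¹) * s⁻¹ ∈ Z := hZconj s _ (hZconj s _ hz1Z)
    have hxeq : x = (s * (s * r₁ * s⁻¹) * s⁻¹)⁻¹ * (s * (s * q * s⁻¹) * s⁻¹) := by
      rw [hx, hconjmul s r₁⁻¹ q, hconjinv s r₁,
        hconjmul s (s * r₁ * s⁻¹)⁻¹ (s * q * s⁻¹), hconjinv s (s * r₁ * s⁻¹)]
    have hdblr₁ : s * (s * r₁ * s⁻¹) * s⁻¹
        = (s * q * s⁻¹) * ((t * q * t⁻¹) * (s * (s * (s * z1 * s⁻¹) * s⁻¹) * s⁻¹)) := by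
      rw [hr₁, hu]
      rw [hconjmul s _ (s * z1 * s⁻¹), hconjmul s (s * (s * q * s⁻¹) * s⁻¹) _]
      rw [hconjmul s _ (s * (s * z1 * s⁻¹) * s⁻¹),
        hconjmul s (s * (s * (s * q * s⁻¹) * s⁻¹) * s⁻¹) _]
      rw [hconj3 q, hconj3 (t * q * t⁻¹)]
      group
    have hsr₁ : s * r₁ * s⁻¹
        = q * ((s * (s * (t * q * t⁻¹) * s⁻¹) * s⁻¹) * (s * (s * z1 * s⁻¹) * s⁻¹)) := by
      rw [hr₁, hu]
      rw [hconjmul s _ (s * z1 * s⁻¹), hconjmul s (s * (s * q * s⁻¹) * s⁻¹) _]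
      rw [hconj3 q]
      group
    have hπz3 : π z3 = 1 := by
      have m1 : π z3 = (π x)⁻¹ * π (t * x * t⁻¹) := by
        rw [hz3, map_mul π x⁻¹ _, map_inv π x]
      have m2 : π x = ((π (s * q * s⁻¹) * π (t * q * t⁻¹))⁻¹ * π (s * (s * q * s⁻¹) * s⁻¹)) := by
        rw [hxeq, map_mul π (s * (s * r₁ * s⁻¹) * s⁻¹)⁻¹ _, map_inv π (s * (s * r₁ * s⁻¹) * s⁻¹),
          hdblr₁, map_mul π (s * q * s⁻¹) _, map_mul π (t * q * t⁻¹) _,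
          hker _ (hZconj s _ (hZconj s _ (hZconj s _ hz1Z))), mul_one]
      have m3 : π (t * x * t⁻¹)
          = ((π q * π (s * (s * (t * q * t⁻¹) * s⁻¹) * s⁻¹))⁻¹ * π (s * (t * q * t⁻¹) * s⁻¹)) := by
        rw [hxt, hconjmul s r₁⁻¹ _, hconjinv s r₁,
          map_mul π (s * r₁ * s⁻¹)⁻¹ _, map_inv π (s * r₁ * s⁻¹), hsr₁,
          map_mul π q _, map_mul π (s * (s * (t * q * t⁻¹) * s⁻¹) * s⁻¹) _,
          hker _ (hZconj s _ (hZconj s _ hz1Z)), mul_one]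
      have hA : π q * π (s * q * s⁻¹) * π (s * (s * q * s⁻¹) * s⁻¹) = 1 := by
        have h := congrArg π (hN q hq)
        rw [map_mul π (q * (s * q * s⁻¹)) _, map_mul π q _, map_one] at h
        exact h
      have hB : π (t * q * t⁻¹) * π (s * (t * q * t⁻¹) * s⁻¹) *
          π (s * (s * (t * q * t⁻¹) * s⁻¹) * s⁻¹) = 1 := by
        have h := congrArg π (hN (t * q * t⁻¹) hqtQ)
        rw [map_mul π ((t * q * t⁻¹) * (s * (t * q * t⁻¹) * s⁻¹)) _,
          map_mul π (t * q * t⁻¹) _, map_one] at h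
        exact h
      rw [m1, m2, m3]
      exact hπcalc (π q) (π (s * q * s⁻¹)) (π (s * (s * q * s⁻¹) * s⁻¹))
        (π (t * q * t⁻¹)) (π (s * (t * q * t⁻¹) * s⁻¹))
        (π (s * (s * (t * q * t⁻¹) * s⁻¹) * s⁻¹)) hA hB
        (hπc _ hB3Q _ hq) (hπc _ hqtQ _ hq) (hπc _ hB3Q _ hB2Q)
        (hπc _ hA2Q _ hq) (hπc _ hA3Q _ hq) (hπc _ hA3Q _ hA2Q)
        (hπinv _ hq) (hπinv _ hA3Q) (hπinv _ hB3Q)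
    have hz3Z : z3 ∈ Z := (QuotientGroup.eq_one_iff z3).mp hπz3
    have hz3t : t * z3 * t⁻¹ = z3 := by
      have e1 : t * z3 * t⁻¹ = (t * x * t⁻¹)⁻¹ * ((t * t) * x * (t * t)⁻¹) := by
        rw [hz3]; group
      rw [htt] at e1
      have e2 : (t * x * t⁻¹)⁻¹ * (1 * x * 1⁻¹) = z3⁻¹ := by rw [hz3]; group
      rw [e1, e2, hzinv z3 hz3Z]
    set r₂ : G := x * (s * z3 * s⁻¹) with hr₂
    have hr₂t : t * r₂ * t⁻¹ = r₂ := hfix x z3 hz3Z hz3 hz3t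
    have hr₂Q : r₂ ∈ Q := Q.mul_mem hxQ (hconjQ s z3 (hZQ z3 hz3Z))
    have hr₂Rs : r₂ ∈ Rs := hRsmem r₂ hr₂Q hr₂t
    -- assemble
    have hz3s2Z : s * (s * z3 * s⁻¹) * s⁻¹ ∈ Z := hZconj s _ (hZconj s _ hz3Z)
    have step1 : r₁ * (s * r₂ * s⁻¹) = q * (s * (s * z3 * s⁻¹) * s⁻¹) := by
      rw [hr₂, hconjmul s x (s * z3 * s⁻¹), hxs]
      group
    obtain ⟨e₁, e₂, he₁Rs, he₂Rs, he₁Z, he₂Z, heD⟩ := hZD _ hz3s2Z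
    refine ⟨r₁ * e₁, r₂ * e₂, Rs.mul_mem hr₁Rs he₁Rs, Rs.mul_mem hr₂Rs he₂Rs, ?_⟩
    have hq_eq : q = r₁ * (s * r₂ * s⁻¹) * (s * (s * z3 * s⁻¹) * s⁻¹) := by
      rw [step1]
      calc q = q * ((s * (s * z3 * s⁻¹) * s⁻¹) * (s * (s * z3 * s⁻¹) * s⁻¹)) := by
            rw [hz2 _ hz3s2Z]; group
        _ = q * (s * (s * z3 * s⁻¹) * s⁻¹) * (s * (s * z3 * s⁻¹) * s⁻¹) := by group
    rw [hq_eq, heD]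
    -- q = r₁ (s r₂ s⁻¹) e₁ (s e₂ s⁻¹) = (r₁ e₁)(s (r₂ e₂) s⁻¹)
    have hmv1 : (s * r₂ * s⁻¹) * e₁ = e₁ * (s * r₂ * s⁻¹) :=
      (hzc e₁ he₁Z _ (hconjQ s r₂ hr₂Q)).symm
    calc r₁ * (s * r₂ * s⁻¹) * (e₁ * (s * e₂ * s⁻¹))
        = r₁ * ((s * r₂ * s⁻¹) * e₁) * (s * e₂ * s⁻¹) := by group
      _ = r₁ * (e₁ * (s * r₂ * s⁻¹)) * (s * e₂ * s⁻¹) := by rw [hmv1]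
      _ = (r₁ * e₁) * ((s * r₂ * s⁻¹) * (s * e₂ * s⁻¹)) := by group
      _ = (r₁ * e₁) * (s * (r₂ * e₂) * s⁻¹) := by rw [hconjmul s r₂ e₂]
  -- every automorphism of G preserves Q
  set F : G →* Equiv.Perm (Fin 3) := e₀.toMonoidHom.comp (QuotientGroup.mk' Q) with hF
  have hFker : ∀ g : G, F g = 1 → g ∈ Q := by
    intro g hg
    have h1 : e₀ ((QuotientGroup.mk' Q) g) = e₀ 1 := by
      rw [map_one]
      exact hg
    have h2 : (QuotientGroup.mk' Q) g = 1 := e₀.injective h1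
    exact (QuotientGroup.eq_one_iff g).mp h2
  have hFsurj : Function.Surjective F := by
    intro c
    obtain ⟨xq, hxq⟩ := e₀.surjective c
    obtain ⟨g, rfl⟩ := QuotientGroup.mk'_surjective Q xq
    exact ⟨g, hxq⟩
  have hQpres : ∀ (α : MulAut G), ∀ q ∈ Q, α q ∈ Q := by
    intro α
    have hsq1 : ∀ p ∈ Q, F (α p) * F (α p) = 1 := by
      intro p hp
      have hord1 : orderOf (F (α p)) ∣ orderOf (α p) := orderOf_map_dvd F (α p)
      have hord2 : orderOf (α p) = orderOf p := MulEquiv.orderOf_eq α p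
      have hord3 : orderOf p ∣ 2 ^ (2 + 2 * m) := by
        rw [show p = Q.subtype ⟨p, hp⟩ from rfl,
          orderOf_injective Q.subtype Q.subtype_injective, ← hG.card_Q]
        exact orderOf_dvd_natCard _
      have hdvdpow : orderOf (F (α p)) ∣ 2 ^ (2 + 2 * m) := by
        rw [← hord2] at hord3
        exact hord1.trans hord3
      have hdvd6 : orderOf (F (α p)) ∣ 6 := by
        have h := orderOf_dvd_card (x := F (α p))
        have e6 : Fintype.card (Equiv.Perm (Fin 3)) = 6 := by
          rw [Fintype.card_perm, Fintype.card_fin]; rfl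
        rw [e6] at h; exact h
      have hdvd2 : orderOf (F (α p)) ∣ 2 := by
        obtain ⟨k, -, hk⟩ := (Nat.dvd_prime_pow Nat.prime_two).mp hdvdpow
        rw [hk] at hdvd6 ⊢
        match k with
        | 0 => norm_num
        | 1 => norm_num
        | (n + 2) =>
          exfalso
          have h4 : (4 : ℕ) ∣ 2 ^ (n + 2) := ⟨2 ^ n, by ring⟩
          have h46 : (4 : ℕ) ∣ 6 := h4.trans hdvd6
          norm_num at h46
      have := orderOf_dvd_iff_pow_eq_one.mp hdvd2
      rwa [pow_two] at this
    intro q hq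
    have hcl : ∀ c : Equiv.Perm (Fin 3),
        ((c * F (α q) * c⁻¹) * F (α q)) * ((c * F (α q) * c⁻¹) * F (α q)) = 1 := by
      intro c
      obtain ⟨g, rfl⟩ := hFsurj c
      have hq'' : (α.symm g * q * (α.symm g)⁻¹) * q ∈ Q :=
        Q.mul_mem (hconjQ (α.symm g) q hq) hq
      have hgq : g * (α q) * g⁻¹ * (α q) = α ((α.symm g * q * (α.symm g)⁻¹) * q) := by
        simp only [map_mul, map_inv, MulEquiv.apply_symm_apply]
      have he : (F g * F (α q) * (F g)⁻¹) * F (α q)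
          = F (α ((α.symm g * q * (α.symm g)⁻¹) * q)) := by
        rw [← hgq]
        simp only [map_mul, map_inv]
      rw [he]
      exact hsq1 _ hq''
    have hperm : ∀ y : Equiv.Perm (Fin 3), y * y = 1 →
        (∀ c, ((c * y * c⁻¹) * y) * ((c * y * c⁻¹) * y) = 1) → y = 1 := by decide
    have hone : F (α q) = 1 := hperm _ (hsq1 q hq) hcl
    exact hFker _ hone
  have hRpres : ∀ (α : MulAut G), (∀ l ∈ L, α l = l) → ∀ x ∈ Rs, α x ∈ Rs := by
    intro α hαL x hx
    refine hRsmem _ (hQpres α x (hRsQ x hx)) ?_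
    have h1 := hRst x hx
    have h2 : α t = t := hαL t ht
    calc t * α x * t⁻¹ = α t * α x * (α t)⁻¹ := by rw [h2]
      _ = α (t * x * t⁻¹) := by simp only [map_mul, map_inv]
      _ = α x := by rw [h1]
  have hQL : ∀ g : G, ∃ q l : G, q ∈ Q ∧ l ∈ L ∧ g = q * l := by
    intro g
    obtain ⟨⟨q, l⟩, h, -⟩ := hL.existsUnique g
    exact ⟨q, l, q.2, l.2, h.symm⟩
  set fmap : autCentralizer G L → MulAut Rs := fun α =>
    { toFun := fun x => ⟨(α : MulAut G) (x : G), hRpres α α.2 _ x.2⟩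
      invFun := fun x => ⟨((α⁻¹ : autCentralizer G L) : MulAut G) (x : G),
        hRpres _ (α⁻¹).2 _ x.2⟩
      left_inv := fun x => Subtype.ext ((α : MulAut G).symm_apply_apply (x : G))
      right_inv := fun x => Subtype.ext ((α : MulAut G).apply_symm_apply (x : G))
      map_mul' := fun x y => Subtype.ext (map_mul (α : MulAut G) (x : G) (y : G)) }
    with hfmap
  have hf_hom : ∀ α β : autCentralizer G L, fmap (α * β) = fmap α * fmap β := by
    intro α β
    ext x
    rfl
  refine ⟨MonoidHom.mk' fmap hf_hom, fun α x => rfl, ?_, ?_⟩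
  · -- injectivity
    rw [injective_iff_map_eq_one]
    intro α hα1
    have hfixR : ∀ x ∈ Rs, (α : MulAut G) x = x := by
      intro x hx
      have h1 : fmap α ⟨x, hx⟩ = (1 : MulAut Rs) ⟨x, hx⟩ := by
        rw [show fmap α = (MonoidHom.mk' fmap hf_hom) α from rfl, hα1]
      have h2 := congrArg Subtype.val h1
      exact h2
    have hA1 : (α : MulAut G) = 1 := by
      apply DFunLike.ext
      intro g
      obtain ⟨q, l, hq, hl, rfl⟩ := hQL g
      obtain ⟨r₁, r₂, hr₁, hr₂, rfl⟩ := hX q hq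
      have e1 : (α : MulAut G) (r₁ * (s * r₂ * s⁻¹) * l)
          = (α : MulAut G) r₁ * ((α : MulAut G) s * (α : MulAut G) r₂ *
            ((α : MulAut G) s)⁻¹) * (α : MulAut G) l := by
        simp only [map_mul, map_inv]
      rw [e1, hfixR r₁ hr₁, hfixR r₂ hr₂, α.2 s hsL, α.2 l hl]
      rfl
    exact Subtype.ext hA1
  · -- surjectivity
    intro β
    set b : G → G := fun x => if h : x ∈ Rs then ((β ⟨x, h⟩ : Rs) : G) else 1 with hbdef
    have hbval : ∀ (x) (hx : x ∈ Rs), b x = ((β ⟨x, hx⟩ : Rs) : G) := by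
      intro x hx
      rw [hbdef]
      dsimp only
      rw [dif_pos hx]
    have hbR : ∀ x ∈ Rs, b x ∈ Rs := by
      intro x hx
      rw [hbval x hx]
      exact (β ⟨x, hx⟩).2
    have hb1 : b 1 = 1 := by
      rw [hbval 1 (one_mem _)]
      have h1 : (⟨1, one_mem _⟩ : Rs) = 1 := rfl
      rw [h1, map_one]
      rfl
    have hbmul : ∀ x ∈ Rs, ∀ y ∈ Rs, b (x * y) = b x * b y := by
      intro x hx y hy
      rw [hbval x hx, hbval y hy, hbval (x * y) (mul_mem hx hy)]
      have h1 : (⟨x * y, mul_mem hx hy⟩ : Rs) = ⟨x, hx⟩ * ⟨y, hy⟩ := rfl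
      rw [h1, map_mul]
      rfl
    have hbinv : ∀ x ∈ Rs, b x⁻¹ = (b x)⁻¹ := by
      intro x hx
      rw [hbval x hx, hbval x⁻¹ (inv_mem hx)]
      have h1 : (⟨x⁻¹, inv_mem hx⟩ : Rs) = (⟨x, hx⟩)⁻¹ := rfl
      rw [h1, map_inv]
      rfl
    have hbinj : ∀ x ∈ Rs, b x = 1 → x = 1 := by
      intro x hx h
      have h1 : β ⟨x, hx⟩ = 1 := by
        apply Subtype.ext
        rw [← hbval x hx, h]
        rfl
      have h2 : (⟨x, hx⟩ : Rs) = 1 := β.injective (h1.trans (map_one β).symm)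
      exact congrArg Subtype.val h2
    have hbsurj : ∀ y ∈ Rs, ∃ x ∈ Rs, b x = y := by
      intro y hy
      refine ⟨((β.symm ⟨y, hy⟩ : Rs) : G), (β.symm ⟨y, hy⟩).2, ?_⟩
      rw [hbval _ (β.symm ⟨y, hy⟩).2]
      have h1 : (⟨((β.symm ⟨y, hy⟩ : Rs) : G), (β.symm ⟨y, hy⟩).2⟩ : Rs) = β.symm ⟨y, hy⟩ :=
        rfl
      rw [h1, MulEquiv.apply_symm_apply]
    have hcommRs : ∀ x ∈ Rs, ∀ y ∈ Rs, ⁅x, y⁆ ∈ Rs := by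
      intro x hx y hy
      rw [commutatorElement_def]
      exact mul_mem (mul_mem (mul_mem hx hy) (inv_mem hx)) (inv_mem hy)
    have hbcommAux : ∀ x ∈ Rs, ∀ y ∈ Rs, ⁅b x, b y⁆ = b ⁅x, y⁆ := by
      intro x hx y hy
      rw [commutatorElement_def, commutatorElement_def,
        hbmul (x * y * x⁻¹) (mul_mem (mul_mem hx hy) (inv_mem hx)) y⁻¹ (inv_mem hy),
        hbmul (x * y) (mul_mem hx hy) x⁻¹ (inv_mem hx), hbmul x hx y hy,
        hbinv x hx, hbinv y hy]
    have hAsubfix : ∀ x ∈ Rs, ∀ y ∈ Rs, b ⁅x, y⁆ = ⁅x, y⁆ := by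
      intro x hx y hy
      by_cases hd : ⁅x, y⁆ = 1
      · rw [hd, hb1]
      · have hdZ : ⁅x, y⁆ ∈ Z := hcommZ x (hRsQ x hx) y (hRsQ y hy)
        have hdt : t * ⁅x, y⁆ * t⁻¹ = ⁅x, y⁆ := by
          rw [hconjcomm t x y, hRst x hx, hRst y hy]
        have hd'Z : ⁅b x, b y⁆ ∈ Z := hcommZ _ (hRsQ _ (hbR x hx)) _ (hRsQ _ (hbR y hy))
        have hd't : t * ⁅b x, b y⁆ * t⁻¹ = ⁅b x, b y⁆ := by
          rw [hconjcomm t (b x) (b y), hRst _ (hbR x hx), hRst _ (hbR y hy)]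
        have hd'1 : ⁅b x, b y⁆ ≠ 1 := by
          intro h
          rw [hbcommAux x hx y hy] at h
          exact hd (hbinj _ (hcommRs x hx y hy) h)
        rw [← hbcommAux x hx y hy]
        exact hA2 _ _ hd'Z hdZ hd't hdt hd'1 hd
    -- splitting of cross commutators
    have hcsplit : ∀ u ∈ Q, ∀ v ∈ Q, ⁅s * u * s⁻¹, v⁆ = ⁅u, v⁆ * (s * ⁅u, v⁆ * s⁻¹) := by
      intro u hu v hv
      rw [hKEY2 u hu v hv, hsconj, hzsq _ (hcommZ u hu v hv)]
    have hdbl : ∀ p ∈ Q, s * (s * p * s⁻¹) * s⁻¹ = (s * p * s⁻¹)⁻¹ * p⁻¹ := by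
      intro p hp
      have h := hN p hp
      calc s * (s * p * s⁻¹) * s⁻¹
          = (p * (s * p * s⁻¹))⁻¹ * (p * (s * p * s⁻¹) * (s * (s * p * s⁻¹) * s⁻¹)) := by
            group
        _ = (p * (s * p * s⁻¹))⁻¹ * 1 := by rw [← h]
        _ = (s * p * s⁻¹)⁻¹ * p⁻¹ := by group
    -- the three rearrangement identities
    have hprod : ∀ x₁ ∈ Rs, ∀ x₂ ∈ Rs, ∀ x₃ ∈ Rs, ∀ x₄ ∈ Rs,
        (x₁ * (s * x₂ * s⁻¹)) * (x₃ * (s * x₄ * s⁻¹))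
        = (⁅x₂, x₃⁆ * (x₁ * x₃)) * (s * (⁅x₂, x₃⁆ * (x₂ * x₄)) * s⁻¹) := by
      intro x₁ h1 x₂ h2 x₃ h3 x₄ h4
      have hQ1 := hRsQ _ h1
      have hQ2 := hRsQ _ h2
      have hQ3 := hRsQ _ h3
      have hdZ : ⁅x₂, x₃⁆ ∈ Z := hcommZ _ hQ2 _ hQ3
      calc (x₁ * (s * x₂ * s⁻¹)) * (x₃ * (s * x₄ * s⁻¹))
          = x₁ * (((s * x₂ * s⁻¹) * x₃) * (s * x₄ * s⁻¹)) := by group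
        _ = x₁ * ((⁅s * x₂ * s⁻¹, x₃⁆ * (x₃ * (s * x₂ * s⁻¹))) * (s * x₄ * s⁻¹)) := by
            rw [← hsw (s * x₂ * s⁻¹) x₃]
        _ = x₁ * (((⁅x₂, x₃⁆ * (s * ⁅x₂, x₃⁆ * s⁻¹)) * (x₃ * (s * x₂ * s⁻¹))) *
              (s * x₄ * s⁻¹)) := by rw [hcsplit x₂ hQ2 x₃ hQ3]
        _ = x₁ * (⁅x₂, x₃⁆ * ((s * ⁅x₂, x₃⁆ * s⁻¹) * (x₃ * ((s * x₂ * s⁻¹) *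
              (s * x₄ * s⁻¹))))) := by group
        _ = ⁅x₂, x₃⁆ * (x₁ * ((s * ⁅x₂, x₃⁆ * s⁻¹) * (x₃ * ((s * x₂ * s⁻¹) *
              (s * x₄ * s⁻¹))))) := by rw [hmove _ hdZ x₁ hQ1]
        _ = ⁅x₂, x₃⁆ * (x₁ * ((s * ⁅x₂, x₃⁆ * s⁻¹) * (x₃ * (s * (x₂ * x₄) * s⁻¹)))) := by
            rw [hconjmul s x₂ x₄]
        _ = ⁅x₂, x₃⁆ * (x₁ * (x₃ * ((s * ⁅x₂, x₃⁆ * s⁻¹) * (s * (x₂ * x₄) * s⁻¹)))) := by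
            rw [hmove _ (hZconj s _ hdZ) x₃ hQ3]
        _ = ⁅x₂, x₃⁆ * (x₁ * (x₃ * (s * (⁅x₂, x₃⁆ * (x₂ * x₄)) * s⁻¹))) := by
            rw [← hconjmul s ⁅x₂, x₃⁆ (x₂ * x₄)]
        _ = (⁅x₂, x₃⁆ * (x₁ * x₃)) * (s * (⁅x₂, x₃⁆ * (x₂ * x₄)) * s⁻¹) := by group
    have hconjsq : ∀ x₁ ∈ Rs, ∀ x₂ ∈ Rs,
        s * (x₁ * (s * x₂ * s⁻¹)) * s⁻¹
        = (⁅x₁ * x₂⁻¹, x₂⁻¹⁆ * x₂⁻¹) * (s * (⁅x₁ * x₂⁻¹, x₂⁻¹⁆ * (x₁ * x₂⁻¹)) * s⁻¹) := by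
      intro x₁ h1 x₂ h2
      have hQ1 := hRsQ _ h1
      have hQ2 := hRsQ _ h2
      have hw12 : x₁ * x₂⁻¹ ∈ Q := Q.mul_mem hQ1 (Q.inv_mem hQ2)
      have hwZ : ⁅x₁ * x₂⁻¹, x₂⁻¹⁆ ∈ Z := hcommZ _ hw12 _ (Q.inv_mem hQ2)
      calc s * (x₁ * (s * x₂ * s⁻¹)) * s⁻¹
          = (s * x₁ * s⁻¹) * (s * (s * x₂ * s⁻¹) * s⁻¹) := by rw [hconjmul]
        _ = (s * x₁ * s⁻¹) * ((s * x₂ * s⁻¹)⁻¹ * x₂⁻¹) := by rw [hdbl x₂ hQ2]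
        _ = ((s * x₁ * s⁻¹) * (s * x₂⁻¹ * s⁻¹)) * x₂⁻¹ := by rw [hconjinv s x₂]; group
        _ = (s * (x₁ * x₂⁻¹) * s⁻¹) * x₂⁻¹ := by rw [hconjmul s x₁ x₂⁻¹]
        _ = ⁅s * (x₁ * x₂⁻¹) * s⁻¹, x₂⁻¹⁆ * (x₂⁻¹ * (s * (x₁ * x₂⁻¹) * s⁻¹)) := by
            rw [← hsw]
        _ = (⁅x₁ * x₂⁻¹, x₂⁻¹⁆ * (s * ⁅x₁ * x₂⁻¹, x₂⁻¹⁆ * s⁻¹)) *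
              (x₂⁻¹ * (s * (x₁ * x₂⁻¹) * s⁻¹)) := by
            rw [hcsplit _ hw12 _ (Q.inv_mem hQ2)]
        _ = ⁅x₁ * x₂⁻¹, x₂⁻¹⁆ * ((s * ⁅x₁ * x₂⁻¹, x₂⁻¹⁆ * s⁻¹) *
              (x₂⁻¹ * (s * (x₁ * x₂⁻¹) * s⁻¹))) := by group
        _ = ⁅x₁ * x₂⁻¹, x₂⁻¹⁆ * (x₂⁻¹ * ((s * ⁅x₁ * x₂⁻¹, x₂⁻¹⁆ * s⁻¹) *
              (s * (x₁ * x₂⁻¹) * s⁻¹))) := by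
            rw [hmove _ (hZconj s _ hwZ) x₂⁻¹ (Q.inv_mem hQ2)]
        _ = ⁅x₁ * x₂⁻¹, x₂⁻¹⁆ * (x₂⁻¹ * (s * (⁅x₁ * x₂⁻¹, x₂⁻¹⁆ * (x₁ * x₂⁻¹)) * s⁻¹)) := by
            rw [← hconjmul s ⁅x₁ * x₂⁻¹, x₂⁻¹⁆ (x₁ * x₂⁻¹)]
        _ = (⁅x₁ * x₂⁻¹, x₂⁻¹⁆ * x₂⁻¹) * (s * (⁅x₁ * x₂⁻¹, x₂⁻¹⁆ * (x₁ * x₂⁻¹)) * s⁻¹) := by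
            group
    have hconjtq : ∀ x₁ ∈ Rs, ∀ x₂ ∈ Rs,
        t * (x₁ * (s * x₂ * s⁻¹)) * t⁻¹ = (x₁ * x₂⁻¹) * (s * x₂⁻¹ * s⁻¹) := by
      intro x₁ h1 x₂ h2
      have hQ2 := hRsQ _ h2
      calc t * (x₁ * (s * x₂ * s⁻¹)) * t⁻¹
          = (t * x₁ * t⁻¹) * (t * (s * x₂ * s⁻¹) * t⁻¹) := by rw [hconjmul]
        _ = x₁ * (s * (s * (t * x₂ * t⁻¹) * s⁻¹) * s⁻¹) := by rw [hRst _ h1, hconvB x₂]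
        _ = x₁ * (s * (s * x₂ * s⁻¹) * s⁻¹) := by rw [hRst _ h2]
        _ = x₁ * ((s * x₂ * s⁻¹)⁻¹ * x₂⁻¹) := by rw [hdbl x₂ hQ2]
        _ = x₁ * ((s * x₂⁻¹ * s⁻¹) * x₂⁻¹) := by rw [hconjinv s x₂]
        _ = x₁ * (x₂⁻¹ * (s * x₂⁻¹ * s⁻¹)) := by rw [hSC x₂⁻¹ (Q.inv_mem hQ2)]
        _ = (x₁ * x₂⁻¹) * (s * x₂⁻¹ * s⁻¹) := by group
    -- decomposition functions and the quadratic map aQ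
    have hdecomp : ∀ q : G, ∃ p : G × G, q ∈ Q →
        (p.1 ∈ Rs ∧ p.2 ∈ Rs ∧ q = p.1 * (s * p.2 * s⁻¹)) := by
      intro q
      by_cases hq : q ∈ Q
      · obtain ⟨r₁, r₂, h1, h2, h3⟩ := hX q hq
        exact ⟨(r₁, r₂), fun _ => ⟨h1, h2, h3⟩⟩
      · exact ⟨(1, 1), fun h => absurd h hq⟩
    obtain ⟨d1, d2, hd⟩ : ∃ d1 d2 : G → G, ∀ q ∈ Q,
        d1 q ∈ Rs ∧ d2 q ∈ Rs ∧ q = d1 q * (s * d2 q * s⁻¹) :=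
      ⟨fun q => (Classical.choose (hdecomp q)).1, fun q => (Classical.choose (hdecomp q)).2,
        fun q hq => Classical.choose_spec (hdecomp q) hq⟩
    set aQ : G → G := fun q => b (d1 q) * (s * b (d2 q) * s⁻¹) with haQdef
    have haQeval : ∀ p : G, aQ p = b (d1 p) * (s * b (d2 p) * s⁻¹) := fun p => rfl
    have haQ : ∀ x₁ ∈ Rs, ∀ x₂ ∈ Rs, aQ (x₁ * (s * x₂ * s⁻¹)) = b x₁ * (s * b x₂ * s⁻¹) := by
      intro x₁ h1 x₂ h2
      have hqQ : x₁ * (s * x₂ * s⁻¹) ∈ Q :=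
        Q.mul_mem (hRsQ _ h1) (hconjQ s _ (hRsQ _ h2))
      obtain ⟨hA, hB, hC⟩ := hd _ hqQ
      obtain ⟨e1, e2⟩ := hU _ _ _ _ hA hB h1 h2 hC.symm
      rw [haQeval, e1, e2]
    have haQ1 : aQ 1 = 1 := by
      have h := haQ 1 (one_mem _) 1 (one_mem _)
      rw [show (1 : G) * (s * 1 * s⁻¹) = 1 from by group] at h
      rw [h, hb1]
      group
    -- aQ is multiplicative on Q
    have hHQ : ∀ q ∈ Q, ∀ q' ∈ Q, aQ (q * q') = aQ q * aQ q' := by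
      intro q hq q' hq'
      obtain ⟨h1, h2, he⟩ := hd q hq
      obtain ⟨h3, h4, he'⟩ := hd q' hq'
      have hc23 : ⁅d2 q, d1 q'⁆ ∈ Rs := hcommRs _ h2 _ h3
      have hm1 : ⁅d2 q, d1 q'⁆ * (d1 q * d1 q') ∈ Rs :=
        mul_mem hc23 (mul_mem h1 h3)
      have hm2 : ⁅d2 q, d1 q'⁆ * (d2 q * d2 q') ∈ Rs :=
        mul_mem hc23 (mul_mem h2 h4)
      have hbc : ⁅b (d2 q), b (d1 q')⁆ = ⁅d2 q, d1 q'⁆ :=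
        (hbcommAux _ h2 _ h3).trans (hAsubfix _ h2 _ h3)
      calc aQ (q * q')
          = aQ ((d1 q * (s * d2 q * s⁻¹)) * (d1 q' * (s * d2 q' * s⁻¹))) := by
            rw [← he, ← he']
        _ = aQ ((⁅d2 q, d1 q'⁆ * (d1 q * d1 q')) *
              (s * (⁅d2 q, d1 q'⁆ * (d2 q * d2 q')) * s⁻¹)) := by
            rw [hprod _ h1 _ h2 _ h3 _ h4]
        _ = b (⁅d2 q, d1 q'⁆ * (d1 q * d1 q')) *
              (s * b (⁅d2 q, d1 q'⁆ * (d2 q * d2 q')) * s⁻¹) := haQ _ hm1 _ hm2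
        _ = (⁅d2 q, d1 q'⁆ * (b (d1 q) * b (d1 q'))) *
              (s * (⁅d2 q, d1 q'⁆ * (b (d2 q) * b (d2 q'))) * s⁻¹) := by
            rw [hbmul _ hc23 _ (mul_mem h1 h3), hbmul _ hc23 _ (mul_mem h2 h4),
              hbmul _ h1 _ h3, hbmul _ h2 _ h4, hAsubfix _ h2 _ h3]
        _ = (⁅b (d2 q), b (d1 q')⁆ * (b (d1 q) * b (d1 q'))) *
              (s * (⁅b (d2 q), b (d1 q')⁆ * (b (d2 q) * b (d2 q'))) * s⁻¹) := by
            rw [hbc]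
        _ = (b (d1 q) * (s * b (d2 q) * s⁻¹)) * (b (d1 q') * (s * b (d2 q') * s⁻¹)) := by
            rw [← hprod _ (hbR _ h1) _ (hbR _ h2) _ (hbR _ h3) _ (hbR _ h4)]
        _ = aQ q * aQ q' := by rw [← haQeval, ← haQeval]
    -- aQ commutes with conjugation by s and t
    have hHs : ∀ q ∈ Q, aQ (s * q * s⁻¹) = s * aQ q * s⁻¹ := by
      intro q hq
      obtain ⟨h1, h2, he⟩ := hd q hq
      have h12 : d1 q * (d2 q)⁻¹ ∈ Rs := mul_mem h1 (inv_mem h2)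
      have hw : ⁅d1 q * (d2 q)⁻¹, (d2 q)⁻¹⁆ ∈ Rs := hcommRs _ h12 _ (inv_mem h2)
      have hm1 : ⁅d1 q * (d2 q)⁻¹, (d2 q)⁻¹⁆ * (d2 q)⁻¹ ∈ Rs := mul_mem hw (inv_mem h2)
      have hm2 : ⁅d1 q * (d2 q)⁻¹, (d2 q)⁻¹⁆ * (d1 q * (d2 q)⁻¹) ∈ Rs := mul_mem hw h12
      have hwb : ⁅b (d1 q) * (b (d2 q))⁻¹, (b (d2 q))⁻¹⁆ = ⁅d1 q * (d2 q)⁻¹, (d2 q)⁻¹⁆ := by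
        rw [← hbinv _ h2, ← hbmul _ h1 _ (inv_mem h2)]
        exact (hbcommAux _ h12 _ (inv_mem h2)).trans (hAsubfix _ h12 _ (inv_mem h2))
      calc aQ (s * q * s⁻¹)
          = aQ (s * (d1 q * (s * d2 q * s⁻¹)) * s⁻¹) := by rw [← he]
        _ = aQ ((⁅d1 q * (d2 q)⁻¹, (d2 q)⁻¹⁆ * (d2 q)⁻¹) *
              (s * (⁅d1 q * (d2 q)⁻¹, (d2 q)⁻¹⁆ * (d1 q * (d2 q)⁻¹)) * s⁻¹)) := by
            rw [hconjsq _ h1 _ h2]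
        _ = b (⁅d1 q * (d2 q)⁻¹, (d2 q)⁻¹⁆ * (d2 q)⁻¹) *
              (s * b (⁅d1 q * (d2 q)⁻¹, (d2 q)⁻¹⁆ * (d1 q * (d2 q)⁻¹)) * s⁻¹) :=
            haQ _ hm1 _ hm2
        _ = (⁅d1 q * (d2 q)⁻¹, (d2 q)⁻¹⁆ * (b (d2 q))⁻¹) *
              (s * (⁅d1 q * (d2 q)⁻¹, (d2 q)⁻¹⁆ * (b (d1 q) * (b (d2 q))⁻¹)) * s⁻¹) := by
            rw [hbmul _ hw _ (inv_mem h2), hbmul _ hw _ h12,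
              hAsubfix _ h12 _ (inv_mem h2), hbinv _ h2, hbmul _ h1 _ (inv_mem h2),
              hbinv _ h2]
        _ = (⁅b (d1 q) * (b (d2 q))⁻¹, (b (d2 q))⁻¹⁆ * (b (d2 q))⁻¹) *
              (s * (⁅b (d1 q) * (b (d2 q))⁻¹, (b (d2 q))⁻¹⁆ *
                (b (d1 q) * (b (d2 q))⁻¹)) * s⁻¹) := by rw [hwb]
        _ = s * (b (d1 q) * (s * b (d2 q) * s⁻¹)) * s⁻¹ := by
            rw [← hconjsq _ (hbR _ h1) _ (hbR _ h2)]
        _ = s * aQ q * s⁻¹ := by rw [← haQeval]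
    have hHt : ∀ q ∈ Q, aQ (t * q * t⁻¹) = t * aQ q * t⁻¹ := by
      intro q hq
      obtain ⟨h1, h2, he⟩ := hd q hq
      have h12 : d1 q * (d2 q)⁻¹ ∈ Rs := mul_mem h1 (inv_mem h2)
      calc aQ (t * q * t⁻¹)
          = aQ (t * (d1 q * (s * d2 q * s⁻¹)) * t⁻¹) := by rw [← he]
        _ = aQ ((d1 q * (d2 q)⁻¹) * (s * (d2 q)⁻¹ * s⁻¹)) := by rw [hconjtq _ h1 _ h2]
        _ = b (d1 q * (d2 q)⁻¹) * (s * b ((d2 q)⁻¹) * s⁻¹) := haQ _ h12 _ (inv_mem h2)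
        _ = (b (d1 q) * (b (d2 q))⁻¹) * (s * (b (d2 q))⁻¹ * s⁻¹) := by
            rw [hbmul _ h1 _ (inv_mem h2), hbinv _ h2]
        _ = t * (b (d1 q) * (s * b (d2 q) * s⁻¹)) * t⁻¹ := by
            rw [← hconjtq _ (hbR _ h1) _ (hbR _ h2)]
        _ = t * aQ q * t⁻¹ := by rw [← haQeval]
    -- equivariance for all of L via words in s,t
    have hcomp : ∀ g₁ g₂ : G, (∀ q ∈ Q, aQ (g₁ * q * g₁⁻¹) = g₁ * aQ q * g₁⁻¹) →
        (∀ q ∈ Q, aQ (g₂ * q * g₂⁻¹) = g₂ * aQ q * g₂⁻¹) →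
        ∀ q ∈ Q, aQ ((g₁ * g₂) * q * (g₁ * g₂)⁻¹) = (g₁ * g₂) * aQ q * (g₁ * g₂)⁻¹ := by
      intro g₁ g₂ hg₁ hg₂ q hq
      have e1 : (g₁ * g₂) * q * (g₁ * g₂)⁻¹ = g₁ * (g₂ * q * g₂⁻¹) * g₁⁻¹ := by group
      rw [e1, hg₁ _ (hconjQ g₂ q hq), hg₂ q hq]
      group
    have hone : ∀ q ∈ Q, aQ ((1 : G) * q * (1 : G)⁻¹) = 1 * aQ q * 1⁻¹ := by
      intro q hq
      rw [show (1 : G) * q * (1 : G)⁻¹ = q from by group]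
      group
    have hinjL : ∀ l ∈ L, ∀ w ∈ L, F l = F w → l = w := by
      intro l hl w hw hFeq
      have h1 : F (w⁻¹ * l) = 1 := by rw [map_mul, map_inv, ← hFeq]; group
      have h2 : w⁻¹ * l ∈ Q ⊓ L := ⟨hFker _ h1, L.mul_mem (L.inv_mem hw) hl⟩
      rw [hL.disjoint.eq_bot] at h2
      have h4 : w⁻¹ * l = 1 := by simpa using h2
      calc l = w * (w⁻¹ * l) := by group
        _ = w := by rw [h4]; group
    have hperm6 : ∀ σ τ x : Equiv.Perm (Fin 3), σ * σ * σ = 1 → σ ≠ 1 → τ * τ = 1 →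
        τ ≠ 1 → (x = 1 ∨ x = σ ∨ x = σ * σ ∨ x = τ ∨ x = σ * τ ∨ x = σ * σ * τ) := by
      decide
    have hLword : ∀ l ∈ L, l = 1 ∨ l = s ∨ l = s * s ∨ l = t ∨ l = s * t ∨
        l = s * s * t := by
      intro l hl
      have hFs3 : F s * F s * F s = 1 := by rw [← map_mul, ← map_mul, hss, map_one]
      have hFs1 : F s ≠ 1 := fun h => hsQ (hFker s h)
      have hFt2 : F t * F t = 1 := by rw [← map_mul, htt, map_one]
      have hFt1 : F t ≠ 1 := fun h => htQ (hFker t h)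
      rcases hperm6 (F s) (F t) (F l) hFs3 hFs1 hFt2 hFt1 with h | h | h | h | h | h
      · exact Or.inl (hinjL l hl 1 (one_mem L) (by rw [h, map_one]))
      · exact Or.inr (Or.inl (hinjL l hl s hsL h))
      · exact Or.inr (Or.inr (Or.inl (hinjL l hl (s * s) (L.mul_mem hsL hsL)
          (by rw [map_mul]; exact h))))
      · exact Or.inr (Or.inr (Or.inr (Or.inl (hinjL l hl t ht h))))
      · exact Or.inr (Or.inr (Or.inr (Or.inr (Or.inl (hinjL l hl (s * t)
          (L.mul_mem hsL ht) (by rw [map_mul]; exact h))))))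
      · exact Or.inr (Or.inr (Or.inr (Or.inr (Or.inr (hinjL l hl (s * s * t)
          (L.mul_mem (L.mul_mem hsL hsL) ht) (by rw [map_mul, map_mul]; exact h))))))
    have hHL : ∀ l ∈ L, ∀ q ∈ Q, aQ (l * q * l⁻¹) = l * aQ q * l⁻¹ := by
      intro l hl
      rcases hLword l hl with rfl | rfl | rfl | rfl | rfl | rfl
      · exact hone
      · exact hHs
      · exact hcomp s s hHs hHs
      · exact hHt
      · exact hcomp s t hHs hHt
      · exact hcomp (s * s) t (hcomp s s hHs hHs) hHt
    -- the global map
    obtain ⟨c1, c2, hc⟩ : ∃ c1 c2 : G → G, ∀ g, c1 g ∈ Q ∧ c2 g ∈ L ∧ g = c1 g * c2 g := by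
      refine ⟨fun g => Classical.choose (hQL g),
        fun g => Classical.choose (Classical.choose_spec (hQL g)), fun g => ?_⟩
      obtain ⟨h1, h2, h3⟩ := Classical.choose_spec (Classical.choose_spec (hQL g))
      exact ⟨h1, h2, h3⟩
    set αf : G → G := fun g => aQ (c1 g) * c2 g with hαfdef
    have hQLu : ∀ q l q' l' : G, q ∈ Q → l ∈ L → q' ∈ Q → l' ∈ L → q * l = q' * l' →
        q = q' ∧ l = l' := by
      intro q l q' l' hq hl hq' hl' heq
      obtain ⟨x, -, hx2⟩ := hL.existsUnique (q * l)
      have e1 := hx2 ⟨⟨q, hq⟩, ⟨l, hl⟩⟩ rfl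
      have e2 := hx2 ⟨⟨q', hq'⟩, ⟨l', hl'⟩⟩ heq.symm
      have e3 := e1.trans e2.symm
      exact ⟨congrArg (fun p : Q × L => ((p.1 : G))) e3,
        congrArg (fun p : Q × L => ((p.2 : G))) e3⟩
    have hαfeval : ∀ q l : G, q ∈ Q → l ∈ L → αf (q * l) = aQ q * l := by
      intro q l hq hl
      obtain ⟨h1, h2, h3⟩ := hc (q * l)
      obtain ⟨e1, e2⟩ := hQLu _ _ _ _ h1 h2 hq hl h3.symm
      rw [hαfdef]
      dsimp only
      rw [e1, e2]
    have hmul : ∀ g h : G, αf (g * h) = αf g * αf h := by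
      intro g h
      obtain ⟨q, l, hq, hl, rfl⟩ := hQL g
      obtain ⟨q', l', hq', hl', rfl⟩ := hQL h
      have e1 : (q * l) * (q' * l') = (q * (l * q' * l⁻¹)) * (l * l') := by group
      rw [e1, hαfeval _ _ (Q.mul_mem hq (hconjQ l q' hq')) (L.mul_mem hl hl'),
        hαfeval q l hq hl, hαfeval q' l' hq' hl',
        hHQ q hq _ (hconjQ l q' hq'), hHL l hl q' hq']
      group
    have hαfsurj : Function.Surjective αf := by
      intro g
      obtain ⟨q, l, hq, hl, rfl⟩ := hQL g
      obtain ⟨r₁, r₂, h1, h2, rfl⟩ := hX q hq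
      obtain ⟨y₁, hy₁, hby₁⟩ := hbsurj r₁ h1
      obtain ⟨y₂, hy₂, hby₂⟩ := hbsurj r₂ h2
      refine ⟨(y₁ * (s * y₂ * s⁻¹)) * l, ?_⟩
      rw [hαfeval _ l (Q.mul_mem (hRsQ _ hy₁) (hconjQ s _ (hRsQ _ hy₂))) hl,
        haQ _ hy₁ _ hy₂, hby₁, hby₂]
    have hαfbij : Function.Bijective αf := Finite.surjective_iff_bijective.mp hαfsurj
    set A : MulAut G := MulEquiv.ofBijective (MonoidHom.mk' αf hmul) hαfbij with hA
    have hAap : ∀ g : G, A g = αf g := fun g => rfl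
    have hAL : ∀ l ∈ L, A l = l := by
      intro l hl
      rw [hAap]
      calc αf l = αf (1 * l) := by rw [one_mul]
        _ = aQ 1 * l := hαfeval 1 l (one_mem Q) hl
        _ = l := by rw [haQ1, one_mul]
    have hAmem : A ∈ autCentralizer G L := hAL
    have hAR : ∀ x ∈ Rs, αf x = b x := by
      intro x hx
      have h1 := hαfeval x 1 (hRsQ x hx) (one_mem L)
      rw [mul_one, mul_one] at h1
      have h2 := haQ x hx 1 (one_mem Rs)
      rw [show s * (1 : G) * s⁻¹ = 1 from by group, mul_one, hb1,
        show s * (1 : G) * s⁻¹ = 1 from by group, mul_one] at h2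
      rw [h1, h2]
    refine ⟨⟨A, hAmem⟩, ?_⟩
    apply DFunLike.ext
    intro x
    apply Subtype.ext
    show A (x : G) = ((β x : Rs) : G)
    rw [hAap, hAR _ x.2, hbval _ x.2]
end
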